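/- arXiv:2001.01721 — 3 statements merged into one kernel-verified Lean document; each statement's English description precedes it below -/
import Mathlib

section
/- Let v ∈ ℚ_p with v ≠ 0 and let s ∈ ℂ satisfy p^{s−1} = 1 (equivalently s = 1 + 2πik/ln p for some k ∈ ℤ). Then the function u ↦ (log_p|u|_p − log_p|v|_p) / |u − v|_p^{s+1} is integrable on ℚ_p with respect to μ, and ∫_{ℚ_p} (log_p|u|_p − log_p|v|_p) / |u − v|_p^{s+1} dμ(u) = 0, where log_p|u|_p = −v_p(u). (Hence the Vladimirov derivative D^s annihilates the logarithmic Green's function away from the diagonal.) -/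
open MeasureTheory Real

noncomputable section

variable (p : ℕ) [Fact p.Prime]

instance : MeasurableSpace ℚ_[p] := borel _
instance : BorelSpace ℚ_[p] := ⟨rfl⟩

/-- `ℤ_p = {x : ℚ_p | ‖x‖ ≤ 1}` as a positive compact subset of `ℚ_p`. -/
def zpCompacts : TopologicalSpace.PositiveCompacts ℚ_[p] where
  carrier := Metric.closedBall 0 1
  isCompact' := isCompact_closedBall 0 1
  interior_nonempty' := by
    refine ⟨0, interior_maximal Metric.ball_subset_closedBall Metric.isOpen_ball ?_⟩
    simp

/-- The additive Haar measure `μ` on `ℚ_p`, normalized so that `μ(ℤ_p) = 1`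
(this normalization is `Measure.addHaarMeasure_self`). -/
def padicHaar : Measure ℚ_[p] := Measure.addHaarMeasure (zpCompacts p)

/-- The `p`-adic fractional part `{x}_p`: the rational in `[0,1) ∩ ℤ[1/p]`
with `x - {x}_p ∈ ℤ_p`.  It is computed from the digit expansion of `p^n·x`
where `n = max(0, -v_p(x))`; the `else` branch is never taken. -/
def padicFract (x : ℚ_[p]) : ℚ :=
  if hx : ‖(p : ℚ_[p]) ^ (-x.valuation).toNat * x‖ ≤ 1 then
    ((PadicInt.appr ⟨(p : ℚ_[p]) ^ (-x.valuation).toNat * x, hx⟩ (-x.valuation).toNat : ℕ) : ℚ)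
      / (p : ℚ) ^ (-x.valuation).toNat
  else 0

/-- The standard additive character `χ(x) = e^{2πi{x}_p}` of `ℚ_p`. -/
def padicChar (x : ℚ_[p]) : ℂ :=
  Complex.exp (2 * π * Complex.I * (padicFract p x : ℂ))

/-- The Gelfand–Graev Gamma function `Γ_p(s) = (1 - p^{s-1})/(1 - p^{-s})` of `ℚ_p`. -/
def gammaP (s : ℂ) : ℂ := (1 - (p : ℂ) ^ (s - 1)) / (1 - (p : ℂ) ^ (-s))

-- AUX PART (to be inserted before the theorem)
namespace VladAux

open MeasureTheory Real

variable (p : ℕ) [Fact p.Prime]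

private lemma hp1 : (1:ℝ) < (p:ℝ) := by exact_mod_cast (Fact.out : p.Prime).one_lt
private lemma hp0 : (0:ℝ) < (p:ℝ) := lt_trans one_pos (hp1 p)
private lemma hpne : (p:ℝ) ≠ 0 := (hp0 p).ne'

instance : (padicHaar p).IsAddHaarMeasure :=
  MeasureTheory.Measure.isAddHaarMeasure_addHaarMeasure _

/-- closed ball of radius `p^(-m)`. -/
private def Bset (m : ℤ) : Set ℚ_[p] := {x | ‖x‖ ≤ (p:ℝ) ^ (-m)}

/-- sphere of radius `p^(-m)`. -/
private def Sset (m : ℤ) : Set ℚ_[p] := {x | ‖x‖ = (p:ℝ) ^ (-m)}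

private lemma measurableSet_Bset (m : ℤ) : MeasurableSet (Bset p m) :=
  (isClosed_le continuous_norm continuous_const).measurableSet

private lemma measurableSet_Sset (m : ℤ) : MeasurableSet (Sset p m) :=
  (isClosed_eq continuous_norm continuous_const).measurableSet

private lemma Bset_closedBall (m : ℤ) :
    Bset p m = Metric.closedBall 0 ((p:ℝ) ^ (-m)) := by
  ext x
  simp [Bset, Metric.mem_closedBall, dist_zero_right]

private lemma haar_Bset_ne_top (m : ℤ) : padicHaar p (Bset p m) ≠ ⊤ := by
  rw [Bset_closedBall]
  exact (isCompact_closedBall _ _).measure_lt_top.ne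

private lemma haar_Bset_zero : padicHaar p (Bset p 0) = 1 := by
  have h : Bset p 0 = Metric.closedBall 0 1 := by rw [Bset_closedBall]; norm_num
  rw [h]
  exact MeasureTheory.Measure.addHaarMeasure_self (K₀ := zpCompacts p)

private lemma haar_sub_shift (c : ℚ_[p]) (A : Set ℚ_[p]) :
    padicHaar p {y | y - c ∈ A} = padicHaar p A := by
  have h : {y : ℚ_[p] | y - c ∈ A} = (fun y => -c + y) ⁻¹' A := by
    ext y; simp [neg_add_eq_sub]
  rw [h]
  exact measure_preimage_add _ _ _

end VladAux

namespace VladAux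
open MeasureTheory Real
variable (p : ℕ) [Fact p.Prime]

private lemma zpow_cancel (m : ℤ) : (p:ℚ_[p]) ^ (-m) * (p:ℚ_[p]) ^ m = 1 := by
  rw [← zpow_add₀ (by exact_mod_cast (Fact.out : p.Prime).ne_zero : (p:ℚ_[p]) ≠ 0)]
  simp

private lemma norm_zpow_p (m : ℤ) : ‖(p:ℚ_[p]) ^ m‖ = (p:ℝ) ^ (-m) := by
  rw [norm_zpow, Padic.norm_p, inv_zpow, ← zpow_neg]

set_option maxHeartbeats 1000000 in
private lemma haar_Bset_rec (m : ℤ) (N : ℕ) :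
    padicHaar p (Bset p m) = (p ^ N : ℕ) * padicHaar p (Bset p (m + N)) := by
  classical
  set C : ℕ → Set ℚ_[p] := fun k => {y | y - ((k : ℕ) : ℚ_[p]) * (p : ℚ_[p]) ^ m ∈ Bset p (m + N)}
    with hC
  have hCmeas : ∀ k, MeasurableSet (C k) := fun k =>
    (measurable_id.sub_const _) (measurableSet_Bset p _)
  have hCm : ∀ k, padicHaar p (C k) = padicHaar p (Bset p (m + N)) := fun k =>
    haar_sub_shift p _ _
  -- norm estimate for membership in a coset
  have hsmall : ∀ (k : ℕ) (x : ℚ_[p]), x ∈ C k → ‖x - ((k : ℕ) : ℚ_[p]) * (p:ℚ_[p]) ^ m‖ ≤ (p:ℝ) ^ (-(m + (N:ℤ))) :=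
    fun k x hx => hx
  have key : Bset p m = ⋃ k : Fin (p ^ N), C (k : ℕ) := by
    ext x
    simp only [Set.mem_iUnion]
    constructor
    · intro hx
      have hy : ‖x * (p:ℚ_[p]) ^ (-m)‖ ≤ 1 := by
        rw [norm_mul, norm_zpow_p, neg_neg]
        calc ‖x‖ * (p:ℝ) ^ m ≤ (p:ℝ) ^ (-m) * (p:ℝ) ^ m := by
              apply mul_le_mul_of_nonneg_right hx (zpow_nonneg (hp0 p).le _)
          _ = 1 := by rw [← zpow_add₀ (hpne p)]; simp
      set z : ℤ_[p] := ⟨x * (p:ℚ_[p]) ^ (-m), hy⟩ with hz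
      have hk : z.appr N < p ^ N := PadicInt.appr_lt z N
      refine ⟨⟨z.appr N, hk⟩, ?_⟩
      have hmem : ‖z - ((z.appr N : ℕ) : ℤ_[p])‖ ≤ (p:ℝ) ^ (-(N:ℤ)) :=
        (PadicInt.norm_le_pow_iff_mem_span_pow _ N).mpr (PadicInt.appr_spec N z)
      have hxrw : x - ((z.appr N : ℕ) : ℚ_[p]) * (p:ℚ_[p]) ^ m
          = ((z : ℚ_[p]) - ((z.appr N : ℕ) : ℚ_[p])) * (p:ℚ_[p]) ^ m := by
        rw [hz]
        push_cast
        rw [sub_mul, mul_assoc, zpow_cancel, mul_one]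
      show x - _ ∈ Bset p (m + N)
      have : ‖x - ((z.appr N : ℕ) : ℚ_[p]) * (p:ℚ_[p]) ^ m‖ ≤ (p:ℝ) ^ (-(m + (N:ℤ))) := by
        rw [hxrw, norm_mul, norm_zpow_p]
        have hcoe : ‖(z : ℚ_[p]) - ((z.appr N : ℕ) : ℚ_[p])‖ ≤ (p:ℝ) ^ (-(N:ℤ)) := by
          have := hmem
          rw [PadicInt.norm_def] at this
          push_cast at this ⊢
          exact this
        calc ‖(z : ℚ_[p]) - ((z.appr N : ℕ) : ℚ_[p])‖ * (p:ℝ) ^ (-m)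
            ≤ (p:ℝ) ^ (-(N:ℤ)) * (p:ℝ) ^ (-m) :=
              mul_le_mul_of_nonneg_right hcoe (zpow_nonneg (hp0 p).le _)
          _ = (p:ℝ) ^ (-(m + (N:ℤ))) := by rw [← zpow_add₀ (hpne p)]; ring_nf
      exact this
    · rintro ⟨k, hk⟩
      have h1 : ‖x - ((k : ℕ) : ℚ_[p]) * (p:ℚ_[p]) ^ m‖ ≤ (p:ℝ) ^ (-(m + (N:ℤ))) := hk
      have h2 : ‖((k : ℕ) : ℚ_[p]) * (p:ℚ_[p]) ^ m‖ ≤ (p:ℝ) ^ (-m) := by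
        rw [norm_mul, norm_zpow_p]
        have : ‖((k : ℕ) : ℚ_[p])‖ ≤ 1 := by
          have := Padic.norm_int_le_one (p := p) (k : ℕ)
          push_cast at this ⊢
          exact this
        calc ‖((k:ℕ) : ℚ_[p])‖ * (p:ℝ) ^ (-m) ≤ 1 * (p:ℝ) ^ (-m) :=
              mul_le_mul_of_nonneg_right this (zpow_nonneg (hp0 p).le _)
          _ = (p:ℝ) ^ (-m) := one_mul _
      show ‖x‖ ≤ (p:ℝ) ^ (-m)
      have hx : x = (x - ((k : ℕ) : ℚ_[p]) * (p:ℚ_[p]) ^ m) + ((k : ℕ) : ℚ_[p]) * (p:ℚ_[p]) ^ m := by ring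
      rw [hx]
      refine le_trans (Padic.nonarchimedean _ _) (max_le (le_trans h1 ?_) ?_)
      · exact zpow_le_zpow_right₀ (hp1 p).le (by omega)
      · exact_mod_cast h2
  have hdisj : Pairwise (Function.onFun Disjoint (fun k : Fin (p ^ N) => C (k : ℕ))) := by
    intro k k' hkk'
    rw [Function.onFun, Set.disjoint_left]
    intro x hxk hxk'
    apply hkk'
    have h1 : ‖x - ((k : ℕ) : ℚ_[p]) * (p:ℚ_[p]) ^ m‖ ≤ (p:ℝ) ^ (-(m + (N:ℤ))) := hxk
    have h2 : ‖x - ((k' : ℕ) : ℚ_[p]) * (p:ℚ_[p]) ^ m‖ ≤ (p:ℝ) ^ (-(m + (N:ℤ))) := hxk'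
    have hdiff : (((k' : ℕ) : ℚ_[p]) - ((k : ℕ) : ℚ_[p])) * (p:ℚ_[p]) ^ m
        = (x - ((k : ℕ) : ℚ_[p]) * (p:ℚ_[p]) ^ m) - (x - ((k' : ℕ) : ℚ_[p]) * (p:ℚ_[p]) ^ m) := by ring
    have h3 : ‖(((k' : ℕ) : ℚ_[p]) - ((k : ℕ) : ℚ_[p])) * (p:ℚ_[p]) ^ m‖ ≤ (p:ℝ) ^ (-(m + (N:ℤ))) := by
      rw [hdiff, sub_eq_add_neg]
      refine le_trans (Padic.nonarchimedean _ _) (max_le h1 (by rw [norm_neg]; exact h2))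
    have h4 : ‖((((k' : ℕ) : ℤ) - ((k : ℕ) : ℤ) : ℤ) : ℚ_[p])‖ ≤ (p:ℝ) ^ (-(N:ℤ)) := by
      rw [norm_mul, norm_zpow_p] at h3
      have hppos : (0:ℝ) < (p:ℝ) ^ (-m) := zpow_pos (hp0 p) _
      have := (mul_le_mul_iff_of_pos_right hppos).mp (by
        calc ‖((k' : ℕ) : ℚ_[p]) - ((k : ℕ) : ℚ_[p])‖ * (p:ℝ) ^ (-m) ≤ (p:ℝ) ^ (-(m + (N:ℤ))) := h3
          _ = (p:ℝ) ^ (-(N:ℤ)) * (p:ℝ) ^ (-m) := by rw [← zpow_add₀ (hpne p)]; ring_nf)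
      push_cast
      exact this
    rw [Padic.norm_int_le_pow_iff_dvd] at h4
    have h6 : (((k' : ℕ) : ℤ) - ((k : ℕ) : ℤ)) = 0 := by
      apply Int.eq_zero_of_abs_lt_dvd h4
      have hk1 : (k : ℕ) < p ^ N := k.isLt
      have hk2 : (k' : ℕ) < p ^ N := k'.isLt
      have hk1' : ((k : ℕ) : ℤ) < (p:ℤ) ^ N := by exact_mod_cast hk1
      have hk2' : ((k' : ℕ) : ℤ) < (p:ℤ) ^ N := by exact_mod_cast hk2
      have hge : (0:ℤ) ≤ ((k : ℕ) : ℤ) := Int.natCast_nonneg _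
      have hge' : (0:ℤ) ≤ ((k' : ℕ) : ℤ) := Int.natCast_nonneg _
      rw [abs_lt]
      omega
    have : (k : ℕ) = (k' : ℕ) := by omega
    exact Fin.ext this
  rw [key, measure_iUnion hdisj (fun k => hCmeas _)]
  rw [tsum_fintype]
  simp only [hCm]
  rw [Finset.sum_const, Finset.card_univ, Fintype.card_fin, nsmul_eq_mul]

end VladAux

namespace VladAux
open MeasureTheory Real
variable (p : ℕ) [Fact p.Prime]

private lemma haar_Bset (m : ℤ) :
    padicHaar p (Bset p m) = ENNReal.ofReal ((p:ℝ) ^ (-m)) := by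
  have hofReal : ∀ N : ℕ, ((p ^ N : ℕ) : ENNReal) = ENNReal.ofReal ((p:ℝ) ^ (N:ℤ)) := by
    intro N
    rw [← ENNReal.ofReal_natCast]
    congr 1
    push_cast
    rw [zpow_natCast]
  rcases le_or_gt 0 m with hm | hm
  · have hN : (m.toNat : ℤ) = m := Int.toNat_of_nonneg hm
    have h := haar_Bset_rec p 0 m.toNat
    rw [haar_Bset_zero, zero_add, hN] at h
    have hpN0 : ((p ^ m.toNat : ℕ) : ENNReal) ≠ 0 := by
      simp [pow_ne_zero, (Fact.out : p.Prime).ne_zero]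
    have hpNt : ((p ^ m.toNat : ℕ) : ENNReal) ≠ ⊤ := ENNReal.natCast_ne_top _
    have : padicHaar p (Bset p m) = (((p ^ m.toNat : ℕ) : ENNReal))⁻¹ := by
      rw [← one_mul (((p ^ m.toNat : ℕ) : ENNReal))⁻¹, h]
      rw [mul_comm, ← mul_assoc, ENNReal.inv_mul_cancel hpN0 hpNt, one_mul]
    rw [this, hofReal, ← ENNReal.ofReal_inv_of_pos (zpow_pos (hp0 p) _), ← zpow_neg, hN]
  · have hN : (((-m).toNat : ℕ) : ℤ) = -m := Int.toNat_of_nonneg (by omega)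
    have h := haar_Bset_rec p m (-m).toNat
    rw [show m + (((-m).toNat : ℕ) : ℤ) = 0 by omega, haar_Bset_zero, mul_one] at h
    rw [h, hofReal, hN]

private lemma Bset_mono {m k : ℤ} (h : m ≤ k) : Bset p k ⊆ Bset p m := fun x hx =>
  le_trans hx (zpow_le_zpow_right₀ (hp1 p).le (by omega))

private lemma Sset_eq_diff (m : ℤ) : Sset p m = Bset p m \ Bset p (m + 1) := by
  ext x
  simp only [Sset, Bset, Set.mem_setOf_eq, Set.mem_diff, not_le]
  constructor
  · intro h
    rw [h]
    exact ⟨le_refl _, zpow_lt_zpow_right₀ (hp1 p) (by omega)⟩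
  · rintro ⟨h1, h2⟩
    have hx0 : x ≠ 0 := by
      rintro rfl
      rw [norm_zero] at h2
      exact absurd h2 (not_lt.mpr (zpow_nonneg (hp0 p).le _))
    rw [Padic.norm_eq_zpow_neg_valuation hx0] at h1 h2 ⊢
    have e1 : -(m + 1) < -x.valuation := (zpow_lt_zpow_iff_right₀ (hp1 p)).mp h2
    have e2 : -x.valuation ≤ -m := (zpow_le_zpow_iff_right₀ (hp1 p)).mp h1
    congr 1
    omega

private lemma haar_Sset (m : ℤ) :
    padicHaar p (Sset p m) = ENNReal.ofReal ((p:ℝ) ^ (-(m+1)) * ((p:ℝ) - 1)) := by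
  rw [Sset_eq_diff, measure_diff (Bset_mono p (by omega))
      ((measurableSet_Bset p (m+1)).nullMeasurableSet) (haar_Bset_ne_top p (m+1)),
    haar_Bset, haar_Bset, ← ENNReal.ofReal_sub _ (zpow_nonneg (hp0 p).le _)]
  congr 1
  have : (p:ℝ) ^ (-m) = (p:ℝ) ^ (-(m+1)) * (p:ℝ) := by
    rw [← zpow_add_one₀ (hpne p)]
    congr 1
    ring
  rw [this]
  ring

private lemma haar_Sset_toReal (m : ℤ) :
    (padicHaar p (Sset p m)).toReal = (p:ℝ) ^ (-(m+1)) * ((p:ℝ) - 1) := by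
  rw [haar_Sset, ENNReal.toReal_ofReal]
  have := hp1 p
  have := zpow_pos (hp0 p) (-(m+1))
  nlinarith

private lemma haar_Sset_ne_top (m : ℤ) : padicHaar p (Sset p m) ≠ ⊤ := by
  rw [haar_Sset]; exact ENNReal.ofReal_ne_top

private lemma mem_Sset_iff (m : ℤ) (x : ℚ_[p]) :
    x ∈ Sset p m ↔ x ≠ 0 ∧ x.valuation = m := by
  constructor
  · intro h
    have hx0 : x ≠ 0 := by
      rintro rfl
      have : (0:ℝ) < (p:ℝ) ^ (-m) := zpow_pos (hp0 p) _
      simp only [Sset, Set.mem_setOf_eq, norm_zero] at h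
      exact absurd h.symm (ne_of_gt this)
    refine ⟨hx0, ?_⟩
    have h' : (p:ℝ) ^ (-x.valuation) = (p:ℝ) ^ (-m) := by
      rw [← Padic.norm_eq_zpow_neg_valuation hx0]; exact h
    have e1 : -x.valuation ≤ -m := (zpow_le_zpow_iff_right₀ (hp1 p)).mp (le_of_eq h')
    have e2 : -m ≤ -x.valuation := (zpow_le_zpow_iff_right₀ (hp1 p)).mp (ge_of_eq h')
    omega
  · rintro ⟨hx0, rfl⟩
    exact Padic.norm_eq_zpow_neg_valuation hx0

private lemma Sset_disjoint {a b : ℤ} (h : a ≠ b) : Disjoint (Sset p a) (Sset p b) := by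
  rw [Set.disjoint_left]
  intro x hxa hxb
  obtain ⟨h0, ha⟩ := (mem_Sset_iff p a x).mp hxa
  obtain ⟨-, hb⟩ := (mem_Sset_iff p b x).mp hxb
  exact h (by omega)

private lemma measurable_valuation : Measurable (fun x : ℚ_[p] => x.valuation) := by
  apply measurable_to_countable
  intro y
  have hfib : (fun x : ℚ_[p] => x.valuation) ⁻¹' {y.valuation}
      = Sset p y.valuation ∪ {x : ℚ_[p] | x = 0 ∧ y.valuation = 0} := by
    ext x
    simp only [Set.mem_preimage, Set.mem_singleton_iff, Set.mem_union, Set.mem_setOf_eq]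
    constructor
    · intro hx
      by_cases hx0 : x = 0
      · right
        refine ⟨hx0, ?_⟩
        rw [← hx, hx0]
        exact Padic.valuation_zero
      · left
        exact (mem_Sset_iff p _ x).mpr ⟨hx0, hx⟩
    · rintro (hx | ⟨rfl, h0⟩)
      · exact ((mem_Sset_iff p _ x).mp hx).2
      · rw [h0]
        exact Padic.valuation_zero
  rw [hfib]
  refine (measurableSet_Sset p _).union ?_
  by_cases h : y.valuation = 0
  · simp only [h, and_true]
    exact (show MeasurableSet {x : ℚ_[p] | x = 0} from by
      simpa using MeasurableSet.singleton (0 : ℚ_[p]))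
  · simp only [h, and_false]
    simpa using MeasurableSet.empty

end VladAux

namespace VladAux
open MeasureTheory Real
variable (p : ℕ) [Fact p.Prime]

private def gfun (v u : ℚ_[p]) : ℝ := ((v.valuation - u.valuation : ℤ) : ℝ) / ‖u - v‖ ^ 2

private lemma measurable_gfun (v : ℚ_[p]) : Measurable (gfun p v) := by
  apply Measurable.div
  · have h1 : Measurable (fun u : ℚ_[p] => ((v.valuation - u.valuation : ℤ) : ℝ)) := by
      exact (measurable_of_countable (fun k : ℤ => ((k : ℝ)))).comp
        (measurable_const.sub (measurable_valuation p))
    exact h1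
  · exact ((continuous_id.sub continuous_const).norm.pow 2).measurable

-- value on spheres with radius > ‖v‖
private lemma gfun_on_high (v : ℚ_[p]) (hv : v ≠ 0) (j : ℕ) (u : ℚ_[p])
    (hu : u ∈ Sset p (v.valuation - 1 - j)) :
    gfun p v u = ((j:ℝ) + 1) * ((p:ℝ) ^ (2 * (v.valuation - 1 - (j:ℤ)))) := by
  obtain ⟨hu0, huval⟩ := (mem_Sset_iff p _ u).mp hu
  have hnu : ‖u‖ = (p:ℝ) ^ (-(v.valuation - 1 - (j:ℤ))) := hu
  have hnv : ‖v‖ = (p:ℝ) ^ (-v.valuation) := Padic.norm_eq_zpow_neg_valuation hv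
  have hlt : ‖v‖ < ‖u‖ := by
    rw [hnu, hnv]
    exact zpow_lt_zpow_right₀ (hp1 p) (by omega)
  have hsub : ‖u - v‖ = ‖u‖ := by
    rw [sub_eq_add_neg, Padic.add_eq_max_of_ne (by rw [norm_neg]; exact ne_of_gt hlt),
      norm_neg]
    exact max_eq_left hlt.le
  unfold gfun
  rw [hsub, hnu, huval]
  have hden : ((p:ℝ) ^ (-(v.valuation - 1 - (j:ℤ)))) ^ 2
      = (p:ℝ) ^ (-(2 * (v.valuation - 1 - (j:ℤ)))) := by
    rw [pow_two, ← zpow_add₀ (hpne p)]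
    congr 1
    ring
  rw [hden, div_eq_mul_inv, ← zpow_neg, neg_neg]
  congr 1
  push_cast
  ring

-- value on spheres with radius < ‖v‖
private lemma gfun_on_low (v : ℚ_[p]) (hv : v ≠ 0) (j : ℕ) (u : ℚ_[p])
    (hu : u ∈ Sset p (v.valuation + 1 + j)) :
    gfun p v u = -(((j:ℝ) + 1) * ((p:ℝ) ^ (2 * v.valuation))) := by
  obtain ⟨hu0, huval⟩ := (mem_Sset_iff p _ u).mp hu
  have hnu : ‖u‖ = (p:ℝ) ^ (-(v.valuation + 1 + (j:ℤ))) := hu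
  have hnv : ‖v‖ = (p:ℝ) ^ (-v.valuation) := Padic.norm_eq_zpow_neg_valuation hv
  have hlt : ‖u‖ < ‖v‖ := by
    rw [hnu, hnv]
    exact zpow_lt_zpow_right₀ (hp1 p) (by omega)
  have hsub : ‖u - v‖ = ‖v‖ := by
    rw [sub_eq_add_neg, Padic.add_eq_max_of_ne (by rw [norm_neg]; exact ne_of_lt hlt),
      norm_neg]
    exact max_eq_right hlt.le
  unfold gfun
  rw [hsub, hnv, huval]
  have hden : ((p:ℝ) ^ (-v.valuation)) ^ 2 = (p:ℝ) ^ (-(2 * v.valuation)) := by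
    rw [pow_two, ← zpow_add₀ (hpne p)]
    congr 1
    ring
  rw [hden, div_eq_mul_inv, ← zpow_neg, neg_neg]
  push_cast
  ring

-- value on the critical sphere
private lemma gfun_on_mid (v : ℚ_[p]) (u : ℚ_[p]) (hu : u ∈ Sset p v.valuation) :
    gfun p v u = 0 := by
  obtain ⟨hu0, huval⟩ := (mem_Sset_iff p _ u).mp hu
  unfold gfun
  rw [huval, sub_self]
  simp

private lemma piece_lemma {X : Type*} [MeasurableSpace X] (μ : Measure X) (A : ℕ → Set X)
    (hA : ∀ j, MeasurableSet (A j)) (hd : Pairwise (Function.onFun Disjoint A))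
    (hfin : ∀ j, μ (A j) ≠ ⊤)
    (f : X → ℝ) (hf : Measurable f) (c : ℕ → ℝ)
    (hfc : ∀ j, ∀ x ∈ A j, f x = c j)
    (hsum : Summable (fun j => |c j| * (μ (A j)).toReal)) :
    IntegrableOn f (⋃ j, A j) μ ∧
      ∫ x in ⋃ j, A j, f x ∂μ = ∑' j, c j * (μ (A j)).toReal := by
  have heach : ∀ j, ∫⁻ x in A j, (‖f x‖₊ : ENNReal) ∂μ
      = ENNReal.ofReal (|c j| * (μ (A j)).toReal) := by
    intro j
    rw [setLIntegral_congr_fun (hA j)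
      (fun x hx => by rw [hfc j x hx])]
    rw [setLIntegral_const, ENNReal.ofReal_mul (abs_nonneg _), ENNReal.ofReal_toReal (hfin j)]
    congr 1
    rw [← Real.norm_eq_abs]; exact (ofReal_norm _).symm
  have hint : IntegrableOn f (⋃ j, A j) μ := by
    refine ⟨hf.aestronglyMeasurable.restrict, ?_⟩
    show (∫⁻ x in ⋃ j, A j, (‖f x‖₊ : ENNReal) ∂μ) < ⊤
    rw [lintegral_iUnion hA hd]
    have : ∑' j, ∫⁻ x in A j, (‖f x‖₊ : ENNReal) ∂μ
        = ENNReal.ofReal (∑' j, |c j| * (μ (A j)).toReal) := by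
      rw [ENNReal.ofReal_tsum_of_nonneg
        (fun j => mul_nonneg (abs_nonneg _) ENNReal.toReal_nonneg) hsum]
      exact tsum_congr heach
    rw [this]
    exact ENNReal.ofReal_lt_top
  refine ⟨hint, ?_⟩
  rw [integral_iUnion hA hd hint]
  refine tsum_congr (fun j => ?_)
  rw [setIntegral_congr_fun (hA j) (fun x hx => hfc j x hx), setIntegral_const, smul_eq_mul,
    mul_comm, measureReal_def]

end VladAux

namespace VladAux
open MeasureTheory Real
variable (p : ℕ) [Fact p.Prime]

private lemma R1_eq (n : ℤ) :
    {u : ℚ_[p] | (p:ℝ) ^ (-n) < ‖u‖} = ⋃ j : ℕ, Sset p (n - 1 - j) := by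
  ext x
  simp only [Set.mem_setOf_eq, Set.mem_iUnion]
  constructor
  · intro hx
    have hx0 : x ≠ 0 := by
      rintro rfl
      rw [norm_zero] at hx
      exact absurd hx (not_lt.mpr (zpow_nonneg (hp0 p).le _))
    have hval : x.valuation < n := by
      rw [Padic.norm_eq_zpow_neg_valuation hx0] at hx
      have := (zpow_lt_zpow_iff_right₀ (hp1 p)).mp hx
      omega
    refine ⟨(n - 1 - x.valuation).toNat, (mem_Sset_iff p _ x).mpr ⟨hx0, ?_⟩⟩
    rw [Int.toNat_of_nonneg (by omega)]
    omega
  · rintro ⟨j, hj⟩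
    obtain ⟨hx0, hval⟩ := (mem_Sset_iff p _ x).mp hj
    rw [Padic.norm_eq_zpow_neg_valuation hx0, hval]
    exact zpow_lt_zpow_right₀ (hp1 p) (by omega)

private lemma R3_eq (n : ℤ) :
    {u : ℚ_[p] | ‖u‖ < (p:ℝ) ^ (-n)} = {(0:ℚ_[p])} ∪ ⋃ j : ℕ, Sset p (n + 1 + j) := by
  ext x
  simp only [Set.mem_setOf_eq, Set.mem_union, Set.mem_singleton_iff, Set.mem_iUnion]
  constructor
  · intro hx
    by_cases hx0 : x = 0
    · exact Or.inl hx0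
    · right
      have hval : n < x.valuation := by
        rw [Padic.norm_eq_zpow_neg_valuation hx0] at hx
        have := (zpow_lt_zpow_iff_right₀ (hp1 p)).mp hx
        omega
      refine ⟨(x.valuation - n - 1).toNat, (mem_Sset_iff p _ x).mpr ⟨hx0, ?_⟩⟩
      rw [Int.toNat_of_nonneg (by omega)]
      omega
  · rintro (rfl | ⟨j, hj⟩)
    · rw [norm_zero]
      exact zpow_pos (hp0 p) _
    · obtain ⟨hx0, hval⟩ := (mem_Sset_iff p _ x).mp hj
      rw [Padic.norm_eq_zpow_neg_valuation hx0, hval]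
      exact zpow_lt_zpow_right₀ (hp1 p) (by omega)

-- the common term value
private lemma term_high (n : ℤ) (j : ℕ) :
    (((j:ℝ) + 1) * ((p:ℝ) ^ (2 * (n - 1 - (j:ℤ))))) * (padicHaar p (Sset p (n - 1 - j))).toReal
      = ((j:ℝ) + 1) * ((p:ℝ) - 1) * (p:ℝ) ^ (n - 2 - (j:ℤ)) := by
  rw [haar_Sset_toReal]
  have h1 : (p:ℝ) ^ (2 * (n - 1 - (j:ℤ))) * (p:ℝ) ^ (-(n - 1 - (j:ℤ) + 1))
      = (p:ℝ) ^ (n - 2 - (j:ℤ)) := by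
    rw [← zpow_add₀ (hpne p)]
    congr 1
    ring
  calc (((j:ℝ) + 1) * ((p:ℝ) ^ (2 * (n - 1 - (j:ℤ)))))
        * ((p:ℝ) ^ (-(n - 1 - (j:ℤ) + 1)) * ((p:ℝ) - 1))
      = ((j:ℝ) + 1) * ((p:ℝ) - 1)
        * ((p:ℝ) ^ (2 * (n - 1 - (j:ℤ))) * (p:ℝ) ^ (-(n - 1 - (j:ℤ) + 1))) := by ring
    _ = ((j:ℝ) + 1) * ((p:ℝ) - 1) * (p:ℝ) ^ (n - 2 - (j:ℤ)) := by rw [h1]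

private lemma term_low (n : ℤ) (j : ℕ) :
    (-(((j:ℝ) + 1) * ((p:ℝ) ^ (2 * n)))) * (padicHaar p (Sset p (n + 1 + j))).toReal
      = -(((j:ℝ) + 1) * ((p:ℝ) - 1) * (p:ℝ) ^ (n - 2 - (j:ℤ))) := by
  rw [haar_Sset_toReal]
  have h1 : (p:ℝ) ^ (2 * n) * (p:ℝ) ^ (-(n + 1 + (j:ℤ) + 1))
      = (p:ℝ) ^ (n - 2 - (j:ℤ)) := by
    rw [← zpow_add₀ (hpne p)]
    congr 1
    ring
  calc (-(((j:ℝ) + 1) * ((p:ℝ) ^ (2 * n))))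
        * ((p:ℝ) ^ (-(n + 1 + (j:ℤ) + 1)) * ((p:ℝ) - 1))
      = -(((j:ℝ) + 1) * ((p:ℝ) - 1)
        * ((p:ℝ) ^ (2 * n) * (p:ℝ) ^ (-(n + 1 + (j:ℤ) + 1)))) := by ring
    _ = -(((j:ℝ) + 1) * ((p:ℝ) - 1) * (p:ℝ) ^ (n - 2 - (j:ℤ))) := by rw [h1]

private lemma summable_t (n : ℤ) :
    Summable (fun j : ℕ => ((j:ℝ) + 1) * ((p:ℝ) - 1) * (p:ℝ) ^ (n - 2 - (j:ℤ))) := by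
  have hr : ‖(p:ℝ)⁻¹‖ < 1 := by
    rw [Real.norm_eq_abs, abs_of_pos (inv_pos.mpr (hp0 p))]
    exact inv_lt_one_of_one_lt₀ (hp1 p)
  have h1 : Summable (fun j : ℕ => ((j:ℝ) + 1) * ((p:ℝ)⁻¹) ^ j) := by
    have ha := summable_pow_mul_geometric_of_norm_lt_one 1 hr
    have hb := summable_geometric_of_norm_lt_one hr
    have := ha.add hb
    refine this.congr (fun j => ?_)
    ring
  have h2 := h1.mul_left (((p:ℝ) - 1) * (p:ℝ) ^ (n - 2))
  refine h2.congr (fun j => ?_)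
  have h3 : (p:ℝ) ^ (n - 2 - (j:ℤ)) = (p:ℝ) ^ (n - 2) * ((p:ℝ)⁻¹) ^ j := by
    rw [inv_pow, ← zpow_natCast (p:ℝ) j, ← zpow_neg, ← zpow_add₀ (hpne p)]
    congr 1
  rw [h3]
  ring

end VladAux

namespace VladAux
open MeasureTheory Real
variable (p : ℕ) [Fact p.Prime]

private lemma real_main (v : ℚ_[p]) (hv : v ≠ 0) :
    Integrable (gfun p v) (padicHaar p) ∧ (∫ u, gfun p v u ∂(padicHaar p)) = 0 := by
  have hdHigh : Pairwise (Function.onFun Disjoint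
      (fun j : ℕ => Sset p (v.valuation - 1 - j))) := by
    intro i j hij
    exact Sset_disjoint p (by omega)
  have hdLow : Pairwise (Function.onFun Disjoint
      (fun j : ℕ => Sset p (v.valuation + 1 + j))) := by
    intro i j hij
    exact Sset_disjoint p (by omega)
  have hsumHigh : Summable (fun j : ℕ =>
      |((j:ℝ) + 1) * ((p:ℝ) ^ (2 * (v.valuation - 1 - (j:ℤ))))|
        * ((padicHaar p) (Sset p (v.valuation - 1 - j))).toReal) := by
    refine (summable_t p v.valuation).congr (fun j => ?_)
    rw [abs_of_nonneg (mul_nonneg (by positivity) (zpow_nonneg (hp0 p).le _))]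
    exact (term_high p v.valuation j).symm
  have hsumLow : Summable (fun j : ℕ =>
      |(-(((j:ℝ) + 1) * ((p:ℝ) ^ (2 * v.valuation))))|
        * ((padicHaar p) (Sset p (v.valuation + 1 + j))).toReal) := by
    refine (summable_t p v.valuation).congr (fun j => ?_)
    rw [abs_neg, abs_of_nonneg (mul_nonneg (by positivity) (zpow_nonneg (hp0 p).le _))]
    have h := term_low p v.valuation j
    linarith [h]
  have hhigh := piece_lemma (padicHaar p) (fun j : ℕ => Sset p (v.valuation - 1 - j))
    (fun j => measurableSet_Sset p _) hdHigh (fun j => haar_Sset_ne_top p _)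
    (gfun p v) (measurable_gfun p v)
    (fun j : ℕ => ((j:ℝ) + 1) * ((p:ℝ) ^ (2 * (v.valuation - 1 - (j:ℤ)))))
    (fun j x hx => gfun_on_high p v hv j x hx) hsumHigh
  have hlow := piece_lemma (padicHaar p) (fun j : ℕ => Sset p (v.valuation + 1 + j))
    (fun j => measurableSet_Sset p _) hdLow (fun j => haar_Sset_ne_top p _)
    (gfun p v) (measurable_gfun p v)
    (fun j : ℕ => -(((j:ℝ) + 1) * ((p:ℝ) ^ (2 * v.valuation))))
    (fun j x hx => gfun_on_low p v hv j x hx) hsumLow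
  have hR1meas : MeasurableSet {u : ℚ_[p] | (p:ℝ) ^ (-v.valuation) < ‖u‖} :=
    (isOpen_lt continuous_const continuous_norm).measurableSet
  have hR3meas : MeasurableSet {u : ℚ_[p] | ‖u‖ < (p:ℝ) ^ (-v.valuation)} :=
    (isOpen_lt continuous_norm continuous_const).measurableSet
  have hR2meas := measurableSet_Sset p v.valuation
  have hI1 : IntegrableOn (gfun p v) {u : ℚ_[p] | (p:ℝ) ^ (-v.valuation) < ‖u‖}
      (padicHaar p) := by
    rw [R1_eq]
    exact hhigh.1
  have hint1 : ∫ x in {u : ℚ_[p] | (p:ℝ) ^ (-v.valuation) < ‖u‖}, gfun p v x ∂(padicHaar p)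
      = ∑' j : ℕ, (((j:ℝ) + 1) * ((p:ℝ) ^ (2 * (v.valuation - 1 - (j:ℤ)))))
          * ((padicHaar p) (Sset p (v.valuation - 1 - j))).toReal := by
    rw [R1_eq]
    exact hhigh.2
  have hI2 : IntegrableOn (gfun p v) (Sset p v.valuation) (padicHaar p) := by
    rw [integrableOn_congr_fun (fun x hx => gfun_on_mid p v x hx) hR2meas]
    exact integrableOn_zero
  have hint2 : ∫ x in Sset p v.valuation, gfun p v x ∂(padicHaar p) = 0 := by
    rw [setIntegral_congr_fun hR2meas (fun x hx => gfun_on_mid p v x hx)]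
    simp
  have hae : {u : ℚ_[p] | ‖u‖ < (p:ℝ) ^ (-v.valuation)}
      =ᵐ[padicHaar p] ⋃ j : ℕ, Sset p (v.valuation + 1 + j) := by
    rw [ae_eq_set]
    constructor
    · refine measure_mono_null ?_ (measure_singleton (0:ℚ_[p]))
      rintro x ⟨hx1, hx2⟩
      rw [R3_eq] at hx1
      rcases hx1 with h0 | hU
      · exact h0
      · exact absurd hU hx2
    · have hsub : (⋃ j : ℕ, Sset p (v.valuation + 1 + j))
          ⊆ {u : ℚ_[p] | ‖u‖ < (p:ℝ) ^ (-v.valuation)} := by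
        rw [R3_eq]
        exact Set.subset_union_right
      rw [Set.diff_eq_empty.mpr hsub]
      exact measure_empty
  have hI3 : IntegrableOn (gfun p v) {u : ℚ_[p] | ‖u‖ < (p:ℝ) ^ (-v.valuation)}
      (padicHaar p) := by
    rw [IntegrableOn, Measure.restrict_congr_set hae]
    exact hlow.1
  have hint3 : ∫ x in {u : ℚ_[p] | ‖u‖ < (p:ℝ) ^ (-v.valuation)}, gfun p v x ∂(padicHaar p)
      = ∑' j : ℕ, (-(((j:ℝ) + 1) * ((p:ℝ) ^ (2 * v.valuation))))
          * ((padicHaar p) (Sset p (v.valuation + 1 + j))).toReal := by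
    rw [setIntegral_congr_set hae]
    exact hlow.2
  have huniv : (Set.univ : Set ℚ_[p])
      = ({u : ℚ_[p] | (p:ℝ) ^ (-v.valuation) < ‖u‖} ∪ Sset p v.valuation)
          ∪ {u : ℚ_[p] | ‖u‖ < (p:ℝ) ^ (-v.valuation)} := by
    ext u
    simp only [Set.mem_univ, true_iff, Set.mem_union, Sset, Set.mem_setOf_eq]
    rcases lt_trichotomy ((p:ℝ) ^ (-v.valuation)) ‖u‖ with h | h | h
    · exact Or.inl (Or.inl h)
    · exact Or.inl (Or.inr h.symm)
    · exact Or.inr h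
  have hd12 : Disjoint {u : ℚ_[p] | (p:ℝ) ^ (-v.valuation) < ‖u‖} (Sset p v.valuation) := by
    rw [Set.disjoint_left]
    intro x h1 h2
    have h2' : ‖x‖ = (p:ℝ) ^ (-v.valuation) := h2
    have h1' : (p:ℝ) ^ (-v.valuation) < ‖x‖ := h1
    rw [h2'] at h1'
    exact lt_irrefl _ h1'
  have hd3 : Disjoint ({u : ℚ_[p] | (p:ℝ) ^ (-v.valuation) < ‖u‖} ∪ Sset p v.valuation)
      {u : ℚ_[p] | ‖u‖ < (p:ℝ) ^ (-v.valuation)} := by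
    rw [Set.disjoint_left]
    rintro x (h1 | h2) h3
    · have h3' : ‖x‖ < (p:ℝ) ^ (-v.valuation) := h3
      have h1' : (p:ℝ) ^ (-v.valuation) < ‖x‖ := h1
      linarith
    · have h3' : ‖x‖ < (p:ℝ) ^ (-v.valuation) := h3
      have h2' : ‖x‖ = (p:ℝ) ^ (-v.valuation) := h2
      linarith
  have hIntOn : IntegrableOn (gfun p v) Set.univ (padicHaar p) := by
    rw [huniv]
    exact (hI1.union hI2).union hI3
  refine ⟨integrableOn_univ.mp hIntOn, ?_⟩
  have hiu : ∫ u, gfun p v u ∂(padicHaar p) = ∫ u in Set.univ, gfun p v u ∂(padicHaar p) :=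
    setIntegral_univ.symm
  rw [hiu, huniv, setIntegral_union hd3 hR3meas (hI1.union hI2) hI3,
    setIntegral_union hd12 hR2meas hI1 hI2, hint1, hint2, hint3]
  have hsum1 : (∑' j : ℕ, (((j:ℝ) + 1) * ((p:ℝ) ^ (2 * (v.valuation - 1 - (j:ℤ)))))
        * ((padicHaar p) (Sset p (v.valuation - 1 - j))).toReal)
      = ∑' j : ℕ, ((j:ℝ) + 1) * ((p:ℝ) - 1) * (p:ℝ) ^ (v.valuation - 2 - (j:ℤ)) :=
    tsum_congr (term_high p v.valuation)
  have hsum3 : (∑' j : ℕ, (-(((j:ℝ) + 1) * ((p:ℝ) ^ (2 * v.valuation))))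
        * ((padicHaar p) (Sset p (v.valuation + 1 + j))).toReal)
      = -∑' j : ℕ, ((j:ℝ) + 1) * ((p:ℝ) - 1) * (p:ℝ) ^ (v.valuation - 2 - (j:ℤ)) := by
    rw [show (fun j : ℕ => (-(((j:ℝ) + 1) * ((p:ℝ) ^ (2 * v.valuation))))
        * ((padicHaar p) (Sset p (v.valuation + 1 + j))).toReal)
      = fun j : ℕ => -(((j:ℝ) + 1) * ((p:ℝ) - 1) * (p:ℝ) ^ (v.valuation - 2 - (j:ℤ)))
      from funext (term_low p v.valuation), tsum_neg]
  rw [hsum1, hsum3]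
  ring

end VladAux

namespace VladAux
open MeasureTheory Real
variable (p : ℕ) [Fact p.Prime]

private lemma cpow_eval (s : ℂ) (hs : ((p:ℕ) : ℂ) ^ (s - 1) = 1) (m : ℤ) :
    (((p:ℝ) ^ (-m) : ℝ) : ℂ) ^ (s + 1) = ((((p:ℝ) ^ (-m)) ^ 2 : ℝ) : ℂ) := by
  have hxpos : (0:ℝ) < (p:ℝ) ^ (-m) := zpow_pos (hp0 p) _
  have hx0 : (((p:ℝ) ^ (-m) : ℝ) : ℂ) ≠ 0 := Complex.ofReal_ne_zero.mpr hxpos.ne'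
  have hpC0 : ((p:ℕ) : ℂ) ≠ 0 := by
    exact_mod_cast (hp0 p).ne'
  have hlogp : Complex.log ((p:ℕ) : ℂ) = ((Real.log (p:ℝ) : ℝ) : ℂ) := by
    rw [show ((p:ℕ) : ℂ) = (((p:ℕ) : ℝ) : ℂ) by push_cast; ring,
      ← Complex.ofReal_log (hp0 p).le]
  have hexp1 : Complex.exp (((Real.log (p:ℝ) : ℝ) : ℂ) * (s - 1)) = 1 := by
    rw [← hlogp, ← Complex.cpow_def_of_ne_zero hpC0, hs]
  have hlog : Complex.log (((p:ℝ) ^ (-m) : ℝ) : ℂ) = ((-m : ℤ) : ℂ) * ((Real.log (p:ℝ) : ℝ) : ℂ) := by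
    rw [← Complex.ofReal_log hxpos.le, Real.log_zpow]
    push_cast
    ring
  have hmain : (((p:ℝ) ^ (-m) : ℝ) : ℂ) ^ (s - 1) = 1 := by
    rw [Complex.cpow_def_of_ne_zero hx0, hlog]
    calc Complex.exp (((-m : ℤ) : ℂ) * ((Real.log (p:ℝ) : ℝ) : ℂ) * (s - 1))
        = Complex.exp (((-m : ℤ) : ℂ) * (((Real.log (p:ℝ) : ℝ) : ℂ) * (s - 1))) := by
          rw [mul_assoc]
      _ = Complex.exp (((Real.log (p:ℝ) : ℝ) : ℂ) * (s - 1)) ^ (-m : ℤ) :=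
          Complex.exp_int_mul _ _
      _ = 1 := by rw [hexp1, one_zpow]
  have hsplit : s + 1 = (s - 1) + 2 := by ring
  rw [hsplit, Complex.cpow_add _ _ hx0, hmain, one_mul]
  rw [show (2 : ℂ) = ((2 : ℕ) : ℂ) by norm_num, Complex.cpow_natCast]
  push_cast
  ring

private lemma integrand_eq (v : ℚ_[p]) (s : ℂ) (hs : ((p:ℕ) : ℂ) ^ (s - 1) = 1) (u : ℚ_[p]) :
    (((-u.valuation : ℤ) : ℂ) - ((-v.valuation : ℤ) : ℂ)) / (‖u - v‖ : ℂ) ^ (s + 1)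
      = ((gfun p v u : ℝ) : ℂ) := by
  by_cases huv : u = v
  · subst huv
    unfold gfun
    simp
  · have h0 : u - v ≠ 0 := sub_ne_zero.mpr huv
    have hnorm : ‖u - v‖ = (p:ℝ) ^ (-(u - v).valuation) := Padic.norm_eq_zpow_neg_valuation h0
    unfold gfun
    rw [hnorm, cpow_eval p s hs ((u - v).valuation)]
    push_cast
    ring

end VladAux


/-- for `v ≠ 0` and `s` with `p^{s-1} = 1` (i.e. `s = 1 + 2πik/ln p`), the
function `u ↦ (log_p|u| - log_p|v|)/|u-v|^{s+1}` (with `log_p|u|_p = -v_p(u)`) is integrable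
on `ℚ_p` and its integral vanishes. -/
theorem vladimirov_annihilates_log_green (v : ℚ_[p]) (hv : v ≠ 0) (s : ℂ)
    (hs : (p : ℂ) ^ (s - 1) = 1) :
    Integrable (fun u : ℚ_[p] =>
      (((-u.valuation : ℤ) : ℂ) - ((-v.valuation : ℤ) : ℂ)) / (‖u - v‖ : ℂ) ^ (s + 1))
      (padicHaar p) ∧
    (∫ u, ((((-u.valuation : ℤ) : ℂ) - ((-v.valuation : ℤ) : ℂ)) / (‖u - v‖ : ℂ) ^ (s + 1))
      ∂(padicHaar p)) = 0 := by
  have hmain := VladAux.real_main p v hv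
  have hfun : (fun u : ℚ_[p] =>
      (((-u.valuation : ℤ) : ℂ) - ((-v.valuation : ℤ) : ℂ)) / (‖u - v‖ : ℂ) ^ (s + 1))
      = fun u => ((VladAux.gfun p v u : ℝ) : ℂ) :=
    funext (VladAux.integrand_eq p v s hs)
  rw [hfun]
  refine ⟨hmain.1.ofReal, ?_⟩
  have hcast : (∫ u, ((VladAux.gfun p v u : ℝ) : ℂ) ∂(padicHaar p))
      = ((∫ u, VladAux.gfun p v u ∂(padicHaar p) : ℝ) : ℂ) := integral_ofReal
  rw [hcast, hmain.2]
  norm_num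

end
end

section
/- For every s ∈ ℂ with 0 < Re(s) < 1, the improper Fourier integral of the Archimedean quasi-character |x|^{s−1} converges and equals the Archimedean Gelfand–Graev Gamma function: lim_{R→∞} ∫_{−R}^{R} |x|^{s−1}·e^{2πi x} dx = 2·cos(πs/2)·(2π)^{−s}·Γ(s), where |x|^{s−1} := exp((s−1)·log|x|) for real x ≠ 0 and Γ denotes the Euler Gamma function. -/
open Real MeasureTheory Set Filter Topology

noncomputable section

namespace GGaux

open Complex

/-- t^a * exp(-δt) is integrable on (0, ∞) for a > -1, δ > 0. -/
lemma int_aux {a δ : ℝ} (ha : -1 < a) (hδ : 0 < δ) :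
    IntegrableOn (fun t : ℝ => t ^ a * Real.exp (-(δ * t))) (Ioi 0) := by
  have h0 : IntegrableOn (fun x : ℝ => Real.exp (-x) * x ^ ((a + 1) - 1)) (Ioi 0) :=
    Real.GammaIntegral_convergent (by linarith)
  simp only [add_sub_cancel_right] at h0
  have h1 : IntegrableOn (fun x : ℝ => Real.exp (-(δ * x)) * (δ * x) ^ a) (Ioi 0) := by
    have := (integrableOn_Ioi_comp_mul_left_iff
      (fun x : ℝ => Real.exp (-x) * x ^ a) 0 hδ).mpr (by simpa using h0)
    simpa using this
  have h2 : IntegrableOn (fun x : ℝ => δ ^ a * (Real.exp (-(δ * x)) * x ^ a)) (Ioi 0) := by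
    apply (h1.congr_fun (fun x hx => ?_) measurableSet_Ioi)
    rw [Real.mul_rpow hδ.le (le_of_lt hx)]; ring
  have h3 : IntegrableOn (fun x : ℝ => (δ ^ a)⁻¹ * (δ ^ a * (Real.exp (-(δ * x)) * x ^ a)))
      (Ioi 0) := h2.const_mul _
  apply h3.congr_fun (fun x hx => ?_) measurableSet_Ioi
  have : (δ:ℝ) ^ a ≠ 0 := (Real.rpow_pos_of_pos hδ a).ne'
  field_simp

variable {s : ℂ}

/-- norm of the integrand -/
lemma norm_f (w z : ℂ) {t : ℝ} (ht : 0 < t) :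
    ‖(t:ℂ) ^ w * Complex.exp (-(z * t))‖ = t ^ w.re * Real.exp (-(z.re * t)) := by
  rw [norm_mul, Complex.norm_exp,
    Complex.norm_cpow_eq_rpow_re_of_pos ht]
  congr 2
  simp [Complex.neg_re, Complex.mul_re]

lemma contOn (w z : ℂ) : ContinuousOn (fun t : ℝ => (t:ℂ) ^ w * Complex.exp (-(z * t)))
    {t : ℝ | 0 < t} := by
  intro t ht
  apply ContinuousAt.continuousWithinAt
  apply ContinuousAt.mul
  · exact (continuousAt_cpow_const (Complex.ofReal_mem_slitPlane.2 ht)).comp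
      Complex.continuous_ofReal.continuousAt
  · exact (Complex.continuous_exp.comp
      ((continuous_const.mul Complex.continuous_ofReal).neg)).continuousAt

lemma aesm (w z : ℂ) {S : Set ℝ} (hS : MeasurableSet S) (hS' : S ⊆ Ioi 0) :
    AEStronglyMeasurable (fun t : ℝ => (t:ℂ) ^ w * Complex.exp (-(z * t)))
      (volume.restrict S) :=
  (ContinuousOn.aestronglyMeasurable ((contOn w z).mono hS') hS)

/-- Integrability over (0,∞) for Re z > 0. -/
lemma int_Ioi (hs0 : 0 < s.re) {z : ℂ} (hz : 0 < z.re) :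
    IntegrableOn (fun t : ℝ => (t:ℂ) ^ (s - 1) * Complex.exp (-(z * t))) (Ioi 0) := by
  apply Integrable.mono' (int_aux (show (-1:ℝ) < s.re - 1 by linarith) hz)
  · exact aesm _ _ measurableSet_Ioi (subset_refl _)
  · filter_upwards [ae_restrict_mem measurableSet_Ioi] with t ht
    rw [norm_f _ _ ht, Complex.sub_re, Complex.one_re]

/-- Integrability of t^(s-2) e^{-zt} over (1,∞) for Re z ≥ 0. -/
lemma int_Ioi_one (hs1 : s.re < 1) {z : ℂ} (hz : 0 ≤ z.re) :
    IntegrableOn (fun t : ℝ => (t:ℂ) ^ (s - 2) * Complex.exp (-(z * t))) (Ioi 1) := by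
  apply Integrable.mono' (integrableOn_Ioi_rpow_of_lt (show s.re - 2 < -1 by linarith) one_pos)
  · exact aesm _ _ measurableSet_Ioi (fun t ht => show (0:ℝ) < t from lt_trans one_pos ht)
  · filter_upwards [ae_restrict_mem measurableSet_Ioi] with t ht
    have ht0 : (0:ℝ) < t := lt_trans one_pos ht
    rw [norm_f _ _ ht0]
    have : Real.exp (-(z.re * t)) ≤ 1 := by
      rw [Real.exp_le_one_iff, neg_nonpos]
      positivity
    calc t ^ (s.re - 2) * Real.exp (-(z.re * t)) ≤ t ^ (s.re - 2) * 1 := by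
          apply mul_le_mul_of_nonneg_left this (by positivity)
      _ = t ^ (s.re - 2) := mul_one _

lemma contOn_cpow (w : ℂ) : ContinuousOn (fun t : ℝ => (t:ℂ) ^ w) {t : ℝ | 0 < t} := by
  intro t ht
  exact ((continuousAt_cpow_const (Complex.ofReal_mem_slitPlane.2 ht)).comp
    Complex.continuous_ofReal.continuousAt).continuousWithinAt

lemma cont_exp (z : ℂ) : Continuous (fun t : ℝ => Complex.exp (-(z * t))) :=
  Complex.continuous_exp.comp ((continuous_const.mul Complex.continuous_ofReal).neg)

/-- interval integrability on [0, R] for Re z ≥ 0 -/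
lemma intInt_zero (hs0 : 0 < s.re) {z : ℂ} (hz : 0 ≤ z.re) {R : ℝ} (hR : 0 ≤ R) :
    IntervalIntegrable (fun t : ℝ => (t:ℂ) ^ (s - 1) * Complex.exp (-(z * t)))
      volume 0 R := by
  rw [intervalIntegrable_iff_integrableOn_Ioc_of_le hR]
  have hb : IntegrableOn (fun t : ℝ => t ^ (s.re - 1)) (Ioc 0 R) := by
    rw [← intervalIntegrable_iff_integrableOn_Ioc_of_le hR]
    exact intervalIntegral.intervalIntegrable_rpow' (by linarith)
  apply Integrable.mono' hb
  · exact aesm _ _ measurableSet_Ioc (fun t ht => ht.1)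
  · filter_upwards [ae_restrict_mem measurableSet_Ioc] with t ht
    rw [norm_f _ _ ht.1, Complex.sub_re, Complex.one_re]
    have h1 : Real.exp (-(z.re * t)) ≤ 1 := by
      rw [Real.exp_le_one_iff, neg_nonpos]
      exact mul_nonneg hz ht.1.le
    calc t ^ (s.re - 1) * Real.exp (-(z.re * t)) ≤ t ^ (s.re - 1) * 1 :=
          mul_le_mul_of_nonneg_left h1 (Real.rpow_nonneg ht.1.le _)
      _ = t ^ (s.re - 1) := mul_one _

lemma intInt_one (z : ℂ) {R : ℝ} (hR : 1 ≤ R) :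
    IntervalIntegrable (fun t : ℝ => (t:ℂ) ^ (s - 1) * Complex.exp (-(z * t)))
      volume 1 R := by
  apply ContinuousOn.intervalIntegrable
  apply (contOn (s-1) z).mono
  rw [uIcc_of_le hR]
  exact fun t ht => lt_of_lt_of_le one_pos ht.1

lemma hasDeriv_u {x : ℝ} (hs1 : s.re < 1) (hx : 0 < x) :
    HasDerivAt (fun y : ℝ => (y:ℂ) ^ (s - 1)) ((s - 1) * (x:ℂ) ^ (s - 2)) x := by
  have hs_ne : s - 1 ≠ 0 := by
    intro h
    rw [sub_eq_zero] at h
    rw [h] at hs1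
    simp at hs1

  have hr2 : s - 2 ≠ -1 := by
    intro h
    apply hs_ne
    have : s = 1 := by linear_combination h
    rw [this]; ring
  have h := hasDerivAt_ofReal_cpow_const' hx.ne' hr2
  have he : s - 2 + 1 = s - 1 := by ring
  rw [he] at h
  have h2 := h.const_mul (s - 1)
  have hfun : (fun y : ℝ => (s - 1) * ((y:ℂ) ^ (s - 1) / (s - 1)))
      = fun y : ℝ => (y:ℂ) ^ (s - 1) := by
    funext y
    field_simp
  rwa [hfun] at h2

lemma hasDeriv_v (z : ℂ) (hz0 : z ≠ 0) (x : ℝ) :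
    HasDerivAt (fun t : ℝ => -(Complex.exp (-(z * t)) / z)) (Complex.exp (-(z * x))) x := by
  have h1 : HasDerivAt (fun t : ℝ => -(z * t)) (-z) x := by
    have h := ((Complex.ofRealCLM.hasDerivAt (x := x)).const_mul z).neg
    simp only [Complex.ofRealCLM_apply, Complex.ofReal_one, mul_one] at h
    exact h
  have h2 := h1.cexp
  have h3 := (h2.div_const z).neg
  refine h3.congr_deriv ?_
  rw [mul_neg, neg_div, neg_neg, mul_div_assoc, div_self hz0, mul_one]

/-- integration by parts on [1, R] -/
lemma ibp (hs1 : s.re < 1) {z : ℂ} (hz0 : z ≠ 0) {R : ℝ} (hR : 1 ≤ R) :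
    ∫ t in (1:ℝ)..R, (t:ℂ) ^ (s - 1) * Complex.exp (-(z * t))
      = -((R:ℂ) ^ (s - 1) * Complex.exp (-(z * R)) / z) + Complex.exp (-z) / z
        + ((s - 1) / z) * ∫ t in (1:ℝ)..R, (t:ℂ) ^ (s - 2) * Complex.exp (-(z * t)) := by
  have hpos : ∀ x ∈ uIcc (1:ℝ) R, 0 < x := by
    rw [uIcc_of_le hR]
    exact fun x hx => lt_of_lt_of_le one_pos hx.1
  have key := intervalIntegral.integral_mul_deriv_eq_deriv_mul
    (u := fun y : ℝ => (y:ℂ) ^ (s - 1))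
    (u' := fun y : ℝ => (s - 1) * (y:ℂ) ^ (s - 2))
    (v := fun t : ℝ => -(Complex.exp (-(z * t)) / z))
    (v' := fun t : ℝ => Complex.exp (-(z * t)))
    (a := 1) (b := R)
    (fun x hx => hasDeriv_u hs1 (hpos x hx))
    (fun x hx => hasDeriv_v z hz0 x)
    (by
      apply ContinuousOn.intervalIntegrable
      apply ContinuousOn.mul continuousOn_const
      apply (contOn_cpow (s - 2)).mono
      exact fun x hx => hpos x hx)
    ((cont_exp z).intervalIntegrable 1 R)
  rw [key]
  have h1 : ∀ x : ℝ, ((s - 1) * (x:ℂ) ^ (s - 2)) * (-(Complex.exp (-(z * x)) / z))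
      = -(((s - 1) / z) * ((x:ℂ) ^ (s - 2) * Complex.exp (-(z * x)))) := by
    intro x
    field_simp
  simp_rw [h1]
  rw [intervalIntegral.integral_neg, intervalIntegral.integral_const_mul]
  push_cast
  rw [Complex.one_cpow]
  ring_nf

/-- The limit value of the truncated integrals. -/
def Jf (s z : ℂ) : ℂ :=
  (∫ t in (0:ℝ)..1, (t:ℂ) ^ (s - 1) * Complex.exp (-(z * t))) + Complex.exp (-z) / z
    + ((s - 1) / z) * ∫ t in Ioi (1:ℝ), (t:ℂ) ^ (s - 2) * Complex.exp (-(z * t))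

/-- Claim B: convergence of the truncated integrals to `Jf s z`, for `Re z ≥ 0`, `z ≠ 0`. -/
lemma tendsto_trunc (hs0 : 0 < s.re) (hs1 : s.re < 1) {z : ℂ} (hz : 0 ≤ z.re) (hz0 : z ≠ 0) :
    Tendsto (fun R : ℝ => ∫ t in (0:ℝ)..R, (t:ℂ) ^ (s - 1) * Complex.exp (-(z * t)))
      atTop (𝓝 (Jf s z)) := by
  have T1 : Tendsto (fun R : ℝ => (R:ℂ) ^ (s - 1) * Complex.exp (-(z * R)) / z)
      atTop (𝓝 0) := by
    have hg : Tendsto (fun R : ℝ => R ^ (s.re - 1) * ‖z‖⁻¹) atTop (𝓝 0) := by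
      have h2 : Tendsto (fun R : ℝ => R ^ (-(1 - s.re)) * ‖z‖⁻¹) atTop (𝓝 (0 * ‖z‖⁻¹)) :=
        (tendsto_rpow_neg_atTop (by linarith)).mul_const _
      simpa using h2
    apply squeeze_zero_norm' ?_ hg
    filter_upwards [eventually_ge_atTop (1:ℝ)] with R hR
    have hR0 : (0:ℝ) < R := lt_of_lt_of_le one_pos hR
    rw [norm_div, norm_f _ _ hR0, Complex.sub_re, Complex.one_re, div_eq_mul_inv]
    apply mul_le_mul_of_nonneg_right _ (inv_nonneg.2 (norm_nonneg _))
    have h1 : Real.exp (-(z.re * R)) ≤ 1 := by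
      rw [Real.exp_le_one_iff, neg_nonpos]
      exact mul_nonneg hz hR0.le
    calc R ^ (s.re - 1) * Real.exp (-(z.re * R)) ≤ R ^ (s.re - 1) * 1 :=
          mul_le_mul_of_nonneg_left h1 (Real.rpow_nonneg hR0.le _)
      _ = R ^ (s.re - 1) := mul_one _
  have T2 : Tendsto (fun R : ℝ => ∫ t in (1:ℝ)..R, (t:ℂ) ^ (s - 2) * Complex.exp (-(z * t)))
      atTop (𝓝 (∫ t in Ioi (1:ℝ), (t:ℂ) ^ (s - 2) * Complex.exp (-(z * t)))) :=
    intervalIntegral_tendsto_integral_Ioi 1 (int_Ioi_one hs1 hz) tendsto_id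
  have T : Tendsto (fun R : ℝ =>
      (∫ t in (0:ℝ)..1, (t:ℂ) ^ (s - 1) * Complex.exp (-(z * t)))
        + (-((R:ℂ) ^ (s - 1) * Complex.exp (-(z * R)) / z) + Complex.exp (-z) / z
          + ((s - 1) / z) * ∫ t in (1:ℝ)..R, (t:ℂ) ^ (s - 2) * Complex.exp (-(z * t))))
      atTop (𝓝 (Jf s z)) := by
    have heq : (∫ t in (0:ℝ)..1, (t:ℂ) ^ (s - 1) * Complex.exp (-(z * t)))
        + (-0 + Complex.exp (-z) / z + ((s - 1) / z)
          * ∫ t in Ioi (1:ℝ), (t:ℂ) ^ (s - 2) * Complex.exp (-(z * t))) = Jf s z := by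
      rw [Jf]; ring
    rw [← heq]
    exact tendsto_const_nhds.add ((T1.neg.add tendsto_const_nhds).add
      (T2.const_mul ((s - 1) / z)))
  apply T.congr'
  filter_upwards [eventually_ge_atTop (1:ℝ)] with R hR
  rw [← intervalIntegral.integral_add_adjacent_intervals
    (intInt_zero hs0 hz zero_le_one) (intInt_one z hR), ibp hs1 hz0 hR]

/-- Claim A: the complex-frequency Gamma integral, for `Re z > 0`. -/
lemma int_eq_gamma (hs0 : 0 < s.re) {z : ℂ} (hz : 0 < z.re) :
    ∫ t in Ioi (0:ℝ), (t:ℂ) ^ (s - 1) * Complex.exp (-(z * t))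
      = Complex.Gamma s * z ^ (-s) := by
  have hUo : IsOpen {z : ℂ | 0 < z.re} := isOpen_lt continuous_const Complex.continuous_re
  have hd1 : DifferentiableOn ℂ
      (fun z : ℂ => ∫ t in Ioi (0:ℝ), (t:ℂ) ^ (s - 1) * Complex.exp (-(z * t)))
      {z : ℂ | 0 < z.re} := by
    intro z₀ hz₀
    apply DifferentiableAt.differentiableWithinAt
    have hε : (0:ℝ) < z₀.re / 2 := half_pos hz₀
    have key := hasDerivAt_integral_of_dominated_loc_of_deriv_le (μ := volume.restrict (Ioi 0))
      (F := fun (z : ℂ) (t : ℝ) => (t:ℂ) ^ (s - 1) * Complex.exp (-(z * t)))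
      (F' := fun (z : ℂ) (t : ℝ) => (t:ℂ) ^ (s - 1) * (Complex.exp (-(z * t)) * (-(t:ℂ))))
      (x₀ := z₀) (bound := fun t : ℝ => t ^ s.re * Real.exp (-(z₀.re / 2 * t))) (Metric.ball_mem_nhds z₀ hε)
      (Eventually.of_forall (fun z => aesm _ _ measurableSet_Ioi subset_rfl))
      (int_Ioi hs0 hz₀)
      (by
        have heq : (fun t : ℝ => (t:ℂ) ^ (s - 1) * (Complex.exp (-(z₀ * t)) * (-(t:ℂ))))
            = fun t : ℝ => ((t:ℂ) ^ (s - 1) * Complex.exp (-(z₀ * t))) * (-(t:ℂ)) :=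
          funext fun t => (mul_assoc _ _ _).symm
        show AEStronglyMeasurable
          (fun t : ℝ => (t:ℂ) ^ (s - 1) * (Complex.exp (-(z₀ * t)) * (-(t:ℂ))))
          (volume.restrict (Ioi 0))
        rw [heq]
        exact (aesm _ _ measurableSet_Ioi subset_rfl).mul
          (Complex.continuous_ofReal.neg.aestronglyMeasurable))
      (by
        filter_upwards [ae_restrict_mem measurableSet_Ioi] with t ht
        intro z hzb
        have hzre : z₀.re / 2 ≤ z.re := by
          have h1 : |(z - z₀).re| ≤ ‖z - z₀‖ := Complex.abs_re_le_norm _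
          rw [Metric.mem_ball, Complex.dist_eq] at hzb
          have h2 : |(z - z₀).re| < z₀.re / 2 := lt_of_le_of_lt h1 hzb
          rw [Complex.sub_re, abs_lt] at h2
          linarith [h2.1]
        have hnorm : ‖(t:ℂ) ^ (s - 1) * (Complex.exp (-(z * t)) * (-(t:ℂ)))‖
            = t ^ s.re * Real.exp (-(z.re * t)) := by
          rw [← mul_assoc, norm_mul, norm_f _ _ ht, norm_neg, Complex.norm_real,
            Real.norm_eq_abs, abs_of_pos ht, Complex.sub_re, Complex.one_re,
            mul_right_comm, ← Real.rpow_add_one ht.ne', sub_add_cancel]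
        rw [hnorm]
        apply mul_le_mul_of_nonneg_left _ (Real.rpow_nonneg ht.le _)
        rw [Real.exp_le_exp]
        have := mul_le_mul_of_nonneg_right hzre ht.le
        linarith
      )
      (int_aux (by linarith) hε)
      (Eventually.of_forall (fun t => by
        intro z hzb
        have h1 : HasDerivAt (fun z : ℂ => -(z * (t:ℂ))) (-(t:ℂ)) z := by
          exact (hasDerivAt_mul_const (t:ℂ) (x := z)).neg
        exact (h1.cexp).const_mul ((t:ℂ) ^ (s - 1))))
    exact key.2.differentiableAt
  have hd2 : DifferentiableOn ℂ (fun z : ℂ => Complex.Gamma s * z ^ (-s))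
      {z : ℂ | 0 < z.re} := by
    intro w hw
    apply DifferentiableAt.differentiableWithinAt
    apply DifferentiableAt.const_mul
    exact differentiableAt_id.cpow (differentiableAt_const _) (Or.inl hw)
  have hA1 := hd1.analyticOnNhd hUo
  have hA2 := hd2.analyticOnNhd hUo
  have hpre : IsPreconnected {z : ℂ | 0 < z.re} := (convex_halfSpace_re_gt 0).isPreconnected
  have h1U : (1:ℂ) ∈ {z : ℂ | 0 < z.re} := by norm_num [Set.mem_setOf_eq, Complex.one_re]
  have key : ∀ r : ℝ, 0 < r →
      ∫ t in Ioi (0:ℝ), (t:ℂ) ^ (s - 1) * Complex.exp (-((r:ℂ) * t))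
        = Complex.Gamma s * (r:ℂ) ^ (-s) := by
    intro r hr
    have h := Complex.integral_cpow_mul_exp_neg_mul_Ioi hs0 hr
    have harg : (↑r : ℂ).arg ≠ π := by
      rw [Complex.arg_ofReal_of_nonneg hr.le]
      exact Ne.symm Real.pi_ne_zero
    rw [h, one_div, Complex.inv_cpow _ _ harg, ← Complex.cpow_neg, mul_comm]
  have hfreq : ∃ᶠ w in 𝓝[≠] (1:ℂ),
      (fun z : ℂ => ∫ t in Ioi (0:ℝ), (t:ℂ) ^ (s - 1) * Complex.exp (-(z * t))) w
        = (fun z : ℂ => Complex.Gamma s * z ^ (-s)) w := by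
    have hu : Tendsto (fun n : ℕ => ((1 + ((n:ℝ) + 1)⁻¹ : ℝ) : ℂ)) atTop (𝓝[≠] (1:ℂ)) := by
      apply tendsto_nhdsWithin_of_tendsto_nhds_of_eventually_within
      · have : Tendsto (fun n : ℕ => (1 + ((n:ℝ) + 1)⁻¹ : ℝ)) atTop (𝓝 1) := by
          have h0 : Tendsto (fun n : ℕ => ((n:ℝ) + 1)⁻¹) atTop (𝓝 0) :=
            tendsto_one_div_add_atTop_nhds_zero_nat.congr (fun n => by rw [one_div])
          simpa using tendsto_const_nhds.add h0
        have := (Complex.continuous_ofReal.tendsto 1).comp this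
        simpa only [Complex.ofReal_one, Function.comp_def] using this
      · apply Eventually.of_forall
        intro n
        simp only [Set.mem_compl_iff, Set.mem_singleton_iff]
        intro h
        rw [← Complex.ofReal_one, Complex.ofReal_inj] at h
        have : (0:ℝ) < ((n:ℝ) + 1)⁻¹ := by positivity
        linarith
    apply hu.frequently
    apply Frequently.of_forall
    intro n
    exact key _ (by positivity)
  exact hA1.eqOn_of_preconnected_of_frequently_eq hA2 hpre h1U hfreq hz

/-- Claim C: `Jf s z` equals the Gamma value for `Re z > 0`. -/
lemma Jf_eq_gamma_pos (hs0 : 0 < s.re) (hs1 : s.re < 1) {z : ℂ} (hz : 0 < z.re) :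
    Jf s z = Complex.Gamma s * z ^ (-s) := by
  have hz0 : z ≠ 0 := fun h => by rw [h] at hz; simp at hz
  have h1 := tendsto_trunc hs0 hs1 hz.le hz0
  have h2 := intervalIntegral_tendsto_integral_Ioi 0 (int_Ioi hs0 hz) tendsto_id
  rw [← int_eq_gamma hs0 hz]
  exact tendsto_nhds_unique h1 h2

/-- Claim D: `Jf s z₀` equals the Gamma value on the boundary `Re z₀ = 0`, `z₀ ≠ 0`. -/
lemma Jf_eq_gamma_boundary (hs0 : 0 < s.re) (hs1 : s.re < 1) {z₀ : ℂ}
    (hre : z₀.re = 0) (him : z₀.im ≠ 0) :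
    Jf s z₀ = Complex.Gamma s * z₀ ^ (-s) := by
  have hz₀ : z₀ ≠ 0 := fun h => him (by rw [h]; simp)
  have hmem : Tendsto (fun ε : ℝ => ((ε:ℂ) + z₀)) (𝓝[>] (0:ℝ)) (𝓝 z₀) := by
    have h1 : Tendsto (fun ε : ℝ => ((ε:ℂ) + z₀)) (𝓝 (0:ℝ)) (𝓝 ((0:ℝ) + z₀)) :=
      (Complex.continuous_ofReal.tendsto 0).add tendsto_const_nhds
    simp only [Complex.ofReal_zero, zero_add] at h1
    exact h1.mono_left nhdsWithin_le_nhds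
  have hrhs : Tendsto (fun ε : ℝ => Complex.Gamma s * ((ε:ℂ) + z₀) ^ (-s)) (𝓝[>] (0:ℝ))
      (𝓝 (Complex.Gamma s * z₀ ^ (-s))) :=
    Tendsto.const_mul _ ((continuousAt_cpow_const (Or.inr him)).tendsto.comp hmem)
  have T1 : Tendsto (fun ε : ℝ => ∫ t in (0:ℝ)..1,
        (t:ℂ) ^ (s - 1) * Complex.exp (-(((ε:ℂ) + z₀) * t))) (𝓝[>] (0:ℝ))
      (𝓝 (∫ t in (0:ℝ)..1, (t:ℂ) ^ (s - 1) * Complex.exp (-(z₀ * t)))) := by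
    simp_rw [intervalIntegral.integral_of_le zero_le_one]
    apply tendsto_integral_filter_of_dominated_convergence (fun t : ℝ => t ^ (s.re - 1))
    · exact Eventually.of_forall (fun ε => aesm _ _ measurableSet_Ioc (fun t ht => ht.1))
    · filter_upwards [self_mem_nhdsWithin] with ε hε
      filter_upwards [ae_restrict_mem measurableSet_Ioc] with t ht
      rw [norm_f _ _ ht.1, Complex.sub_re, Complex.one_re]
      have h1 : Real.exp (-(((ε:ℂ) + z₀).re * t)) ≤ 1 := by
        rw [Real.exp_le_one_iff, neg_nonpos, Complex.add_re, Complex.ofReal_re, hre, add_zero]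
        exact mul_nonneg (le_of_lt hε) ht.1.le
      calc t ^ (s.re - 1) * Real.exp (-(((ε:ℂ) + z₀).re * t)) ≤ t ^ (s.re - 1) * 1 :=
            mul_le_mul_of_nonneg_left h1 (Real.rpow_nonneg ht.1.le _)
        _ = t ^ (s.re - 1) := mul_one _
    · have : IntegrableOn (fun t : ℝ => t ^ (s.re - 1)) (Ioc (0:ℝ) 1) := by
        rw [← intervalIntegrable_iff_integrableOn_Ioc_of_le zero_le_one]
        exact intervalIntegral.intervalIntegrable_rpow' (by linarith)
      exact this
    · filter_upwards [ae_restrict_mem measurableSet_Ioc] with t ht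
      have hc : Continuous (fun z : ℂ => (t:ℂ) ^ (s - 1) * Complex.exp (-(z * t))) :=
        continuous_const.mul (Complex.continuous_exp.comp
          ((continuous_id.mul continuous_const).neg))
      exact (hc.tendsto z₀).comp hmem
  have T2 : Tendsto (fun ε : ℝ => Complex.exp (-((ε:ℂ) + z₀)) / ((ε:ℂ) + z₀)) (𝓝[>] (0:ℝ))
      (𝓝 (Complex.exp (-z₀) / z₀)) :=
    ((Complex.continuous_exp.tendsto _).comp hmem.neg).div hmem hz₀
  have Tint : Tendsto (fun ε : ℝ => ∫ t in Ioi (1:ℝ),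
        (t:ℂ) ^ (s - 2) * Complex.exp (-(((ε:ℂ) + z₀) * t))) (𝓝[>] (0:ℝ))
      (𝓝 (∫ t in Ioi (1:ℝ), (t:ℂ) ^ (s - 2) * Complex.exp (-(z₀ * t)))) := by
    apply tendsto_integral_filter_of_dominated_convergence (fun t : ℝ => t ^ (s.re - 2))
    · exact Eventually.of_forall (fun ε => aesm _ _ measurableSet_Ioi
        (fun t ht => show (0:ℝ) < t from lt_trans one_pos ht))
    · filter_upwards [self_mem_nhdsWithin] with ε hε
      filter_upwards [ae_restrict_mem measurableSet_Ioi] with t ht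
      have ht0 : (0:ℝ) < t := lt_trans one_pos ht
      rw [norm_f _ _ ht0]
      have h1 : Real.exp (-(((ε:ℂ) + z₀).re * t)) ≤ 1 := by
        rw [Real.exp_le_one_iff, neg_nonpos, Complex.add_re, Complex.ofReal_re, hre, add_zero]
        exact mul_nonneg (le_of_lt hε) ht0.le
      calc t ^ (s - 2).re * Real.exp (-(((ε:ℂ) + z₀).re * t)) ≤ t ^ (s - 2).re * 1 :=
            mul_le_mul_of_nonneg_left h1 (Real.rpow_nonneg ht0.le _)
        _ = t ^ (s - 2).re := mul_one _
        _ = t ^ (s.re - 2) := by norm_num [Complex.sub_re]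
    · exact integrableOn_Ioi_rpow_of_lt (by linarith) one_pos
    · filter_upwards [ae_restrict_mem measurableSet_Ioi] with t ht
      have hc : Continuous (fun z : ℂ => (t:ℂ) ^ (s - 2) * Complex.exp (-(z * t))) :=
        continuous_const.mul (Complex.continuous_exp.comp
          ((continuous_id.mul continuous_const).neg))
      exact (hc.tendsto z₀).comp hmem
  have T3 : Tendsto (fun ε : ℝ => ((s - 1) / ((ε:ℂ) + z₀)) * ∫ t in Ioi (1:ℝ),
        (t:ℂ) ^ (s - 2) * Complex.exp (-(((ε:ℂ) + z₀) * t))) (𝓝[>] (0:ℝ))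
      (𝓝 (((s - 1) / z₀) * ∫ t in Ioi (1:ℝ), (t:ℂ) ^ (s - 2) * Complex.exp (-(z₀ * t)))) :=
    (Tendsto.div tendsto_const_nhds hmem hz₀).mul Tint
  have hlhs : Tendsto (fun ε : ℝ => Jf s ((ε:ℂ) + z₀)) (𝓝[>] (0:ℝ)) (𝓝 (Jf s z₀)) := by
    simp only [Jf]
    exact (T1.add T2).add T3
  have hev : (fun ε : ℝ => Jf s ((ε:ℂ) + z₀))
      =ᶠ[𝓝[>] (0:ℝ)] fun ε : ℝ => Complex.Gamma s * ((ε:ℂ) + z₀) ^ (-s) := by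
    filter_upwards [self_mem_nhdsWithin] with ε hε
    apply Jf_eq_gamma_pos hs0 hs1
    rw [Complex.add_re, Complex.ofReal_re, hre, add_zero]
    exact hε
  exact tendsto_nhds_unique hlhs (Filter.Tendsto.congr' hev.symm hrhs)

end GGaux

open GGaux Complex in
/-- for `0 < Re(s) < 1`, the improper Fourier integral of the Archimedean
quasi-character `|x|^{s-1}` converges to the Archimedean Gelfand–Graev Gamma function:
`lim_{R→∞} ∫_{-R}^{R} |x|^{s-1}·e^{2πix} dx = 2·cos(πs/2)·(2π)^{-s}·Γ(s)`. -/
theorem archimedean_gamma_as_fourier_integral (s : ℂ) (hs0 : 0 < s.re) (hs1 : s.re < 1) :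
    Filter.Tendsto
      (fun R : ℝ => ∫ x in (-R)..R,
        ((|x| : ℝ) : ℂ) ^ (s - 1) * Complex.exp (2 * (π : ℂ) * Complex.I * (x : ℂ)))
      Filter.atTop
      (nhds (2 * Complex.cos ((π : ℂ) * s / 2) * (2 * (π : ℂ)) ^ (-s) * Complex.Gamma s)) := by
  have hπ : (0:ℝ) < 2 * π := by positivity
  have h2π0 : (2 * (π : ℂ)) ≠ 0 := by
    simp [Real.pi_ne_zero]
  have hB0 : (2 * (π : ℂ) * Complex.I) ≠ 0 := by
    simp [Real.pi_ne_zero, Complex.I_ne_zero]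
  have hA0 : (-(2 * (π : ℂ) * Complex.I)) ≠ 0 := neg_ne_zero.mpr hB0
  have hBre : (2 * (π : ℂ) * Complex.I).re = 0 := by simp
  have hBim : (2 * (π : ℂ) * Complex.I).im ≠ 0 := by simp [Real.pi_ne_zero]
  have hAre : (-(2 * (π : ℂ) * Complex.I)).re = 0 := by simp
  have hAim : (-(2 * (π : ℂ) * Complex.I)).im ≠ 0 := by simp [Real.pi_ne_zero]
  -- the two half-line limits
  have tendA := tendsto_trunc hs0 hs1 (le_of_eq hAre.symm) hA0
  have tendB := tendsto_trunc hs0 hs1 (le_of_eq hBre.symm) hB0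
  have hJA := Jf_eq_gamma_boundary hs0 hs1 hAre hAim
  have hJB := Jf_eq_gamma_boundary hs0 hs1 hBre hBim
  -- logs
  have hlog2pi : Complex.log (2 * (π : ℂ)) = ((Real.log (2 * π) : ℝ) : ℂ) := by
    rw [show ((2:ℂ) * (π : ℂ)) = (((2 * π : ℝ)) : ℂ) by push_cast; ring,
      ← Complex.ofReal_log hπ.le]
  have habsB : ‖(2 * (π : ℂ) * Complex.I)‖ = 2 * π := by
    simp [Complex.norm_real, abs_of_pos Real.pi_pos]
  have hlogB : Complex.log (2 * (π : ℂ) * Complex.I)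
      = ((Real.log (2 * π) : ℝ) : ℂ) + ((π / 2 : ℝ) : ℂ) * Complex.I := by
    apply Complex.ext
    · rw [Complex.log_re, habsB]
      simp
    · rw [Complex.log_im]
      rw [show ((2:ℂ) * (π : ℂ) * Complex.I) = (((2 * π : ℝ)) : ℂ) * Complex.I by
        push_cast; ring]
      rw [Complex.arg_real_mul _ hπ, Complex.arg_I]
      simp
  have hlogA : Complex.log (-(2 * (π : ℂ) * Complex.I))
      = ((Real.log (2 * π) : ℝ) : ℂ) + ((-(π / 2) : ℝ) : ℂ) * Complex.I := by
    apply Complex.ext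
    · rw [Complex.log_re]
      simp only [norm_neg, habsB]
      simp
    · rw [Complex.log_im]
      rw [show (-((2:ℂ) * (π : ℂ) * Complex.I)) = (((2 * π : ℝ)) : ℂ) * (-Complex.I) by
        push_cast; ring]
      rw [Complex.arg_real_mul _ hπ, Complex.arg_neg_I]
      simp
  have h2pow : (2 * (π : ℂ)) ^ (-s) = Complex.exp (((Real.log (2 * π) : ℝ) : ℂ) * (-s)) := by
    rw [Complex.cpow_def_of_ne_zero h2π0, hlog2pi]
  have hA' : (-(2 * (π : ℂ) * Complex.I)) ^ (-s)
      = (2 * (π : ℂ)) ^ (-s) * Complex.exp ((π : ℂ) * s / 2 * Complex.I) := by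
    rw [Complex.cpow_def_of_ne_zero hA0, hlogA, h2pow, ← Complex.exp_add]
    congr 1
    push_cast
    ring_nf
  have hB' : (2 * (π : ℂ) * Complex.I) ^ (-s)
      = (2 * (π : ℂ)) ^ (-s) * Complex.exp (-((π : ℂ) * s / 2) * Complex.I) := by
    rw [Complex.cpow_def_of_ne_zero hB0, hlogB, h2pow, ← Complex.exp_add]
    congr 1
    push_cast
    ring_nf
  -- value identity
  have hval : Jf s (2 * (π : ℂ) * Complex.I) + Jf s (-(2 * (π : ℂ) * Complex.I))
      = 2 * Complex.cos ((π : ℂ) * s / 2) * (2 * (π : ℂ)) ^ (-s) * Complex.Gamma s := by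
    rw [hJA, hJB, hA', hB', Complex.cos]
    ring_nf
  have main : Tendsto (fun R : ℝ =>
      (∫ t in (0:ℝ)..R, (t:ℂ) ^ (s - 1) * Complex.exp (-((2 * (π : ℂ) * Complex.I) * t)))
        + ∫ t in (0:ℝ)..R, (t:ℂ) ^ (s - 1) * Complex.exp (-((-(2 * (π : ℂ) * Complex.I)) * t)))
      atTop (𝓝 (2 * Complex.cos ((π : ℂ) * s / 2) * (2 * (π : ℂ)) ^ (-s)
        * Complex.Gamma s)) := by
    rw [← hval]
    exact tendB.add tendA
  apply main.congr'
  filter_upwards [eventually_ge_atTop (0:ℝ)] with R hR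
  -- identify the two pieces
  have e1 : ∫ x in (0:ℝ)..R, ((|x| : ℝ) : ℂ) ^ (s - 1)
        * Complex.exp (2 * (π : ℂ) * Complex.I * (x : ℂ))
      = ∫ t in (0:ℝ)..R, (t:ℂ) ^ (s - 1)
        * Complex.exp (-((-(2 * (π : ℂ) * Complex.I)) * t)) := by
    apply intervalIntegral.integral_congr
    intro x hx
    rw [uIcc_of_le hR] at hx
    simp only [_root_.abs_of_nonneg hx.1]
    congr 1
    ring_nf
  have e2 : ∫ x in (-R)..(0:ℝ), ((|x| : ℝ) : ℂ) ^ (s - 1)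
        * Complex.exp (2 * (π : ℂ) * Complex.I * (x : ℂ))
      = ∫ t in (0:ℝ)..R, (t:ℂ) ^ (s - 1)
        * Complex.exp (-((2 * (π : ℂ) * Complex.I) * t)) := by
    have hcn := intervalIntegral.integral_comp_neg (a := (0:ℝ)) (b := R)
      (fun x : ℝ => ((|x| : ℝ) : ℂ) ^ (s - 1)
        * Complex.exp (2 * (π : ℂ) * Complex.I * (x : ℂ)))
    rw [neg_zero] at hcn
    rw [← hcn]
    apply intervalIntegral.integral_congr
    intro x hx
    rw [uIcc_of_le hR] at hx
    simp only [abs_neg, _root_.abs_of_nonneg hx.1, Complex.ofReal_neg]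
    congr 1
    ring_nf
  -- interval integrability of the original integrand
  have hii1 : IntervalIntegrable (fun x : ℝ => ((|x| : ℝ) : ℂ) ^ (s - 1)
      * Complex.exp (2 * (π : ℂ) * Complex.I * (x : ℂ))) volume 0 R := by
    rw [intervalIntegrable_iff_integrableOn_Ioc_of_le hR]
    apply (((intervalIntegrable_iff_integrableOn_Ioc_of_le hR).mp
      (intInt_zero hs0 (le_of_eq hAre.symm) hR))).congr_fun _ measurableSet_Ioc
    intro x hx
    simp only [_root_.abs_of_nonneg hx.1.le]
    congr 1
    ring_nf
  have hii2 : IntervalIntegrable (fun x : ℝ => ((|x| : ℝ) : ℂ) ^ (s - 1)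
      * Complex.exp (2 * (π : ℂ) * Complex.I * (x : ℂ))) volume (-R) 0 := by
    rw [IntervalIntegrable.iff_comp_neg, neg_neg, neg_zero]
    apply IntervalIntegrable.symm
    rw [intervalIntegrable_iff_integrableOn_Ioc_of_le hR]
    apply (((intervalIntegrable_iff_integrableOn_Ioc_of_le hR).mp
      (intInt_zero hs0 (le_of_eq hBre.symm) hR))).congr_fun _ measurableSet_Ioc
    intro x hx
    simp only [abs_neg, _root_.abs_of_nonneg hx.1.le, Complex.ofReal_neg]
    congr 1
    ring_nf
  rw [← e1, ← e2, intervalIntegral.integral_add_adjacent_intervals hii2 hii1]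

end
end

section
/- Let n ≥ 1, let s ∈ ℂ with Re(s) > 0, and let ψ_1, ψ_2 : ℚ_p^n → ℂ be Schwartz–Bruhat functions. Then the double integrals below are absolutely convergent and satisfy ∫_{ℚ_p^n}∫_{ℚ_p^n} ψ_1(x)·(ψ_2(z) − ψ_2(x))·|z − x|_n^{−s−n} dμ_n(z) dμ_n(x) = −(1/2)·∫_{ℚ_p^n}∫_{ℚ_p^n} (ψ_1(z) − ψ_1(x))·(ψ_2(z) − ψ_2(x))·|z − x|_n^{−s−n} dμ_n(z) dμ_n(x); in particular the left-hand side is symmetric under exchanging ψ_1 and ψ_2 (formal self-adjointness of the max-norm Vladimirov derivative on ℚ_p^n). -/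
open MeasureTheory Real

noncomputable section

variable (p : ℕ) [Fact p.Prime]

instance : SigmaFinite (padicHaar p) := Measure.sigmaFinite_addHaarMeasure

/-- The product additive Haar measure `μ_n` on `ℚ_p^n`, normalized so that `μ_n(ℤ_p^n) = 1`.
The norm `‖x‖` on `Fin n → ℚ_[p]` is the maximum norm `|x|_n = max_α |x_α|_p`. -/
def padicHaarPi (n : ℕ) : Measure (Fin n → ℚ_[p]) := Measure.pi fun _ => padicHaar p

-- ==== auxiliary section ====
open Metric Set ENNReal

instance : (padicHaar p).IsAddHaarMeasure := Measure.isAddHaarMeasure_addHaarMeasure _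

instance (n : ℕ) : SigmaFinite (padicHaarPi p n) := by
  unfold padicHaarPi; infer_instance

instance (n : ℕ) : (padicHaarPi p n).IsAddHaarMeasure := Measure.pi.isAddHaarMeasure _

example (n : ℕ) : (padicHaarPi p n).IsAddRightInvariant := inferInstance

variable {p}

lemma padic_pi_norm_add_le_max {n : ℕ} (u v : Fin n → ℚ_[p]) :
    ‖u + v‖ ≤ max ‖u‖ ‖v‖ := by
  refine (pi_norm_le_iff_of_nonneg (le_max_of_le_left (norm_nonneg u))).2 fun i => ?_
  calc ‖(u + v) i‖ = ‖u i + v i‖ := rfl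
    _ ≤ max ‖u i‖ ‖v i‖ := IsUltrametricDist.norm_add_le_max _ _
    _ ≤ max ‖u‖ ‖v‖ := max_le_max (norm_le_pi_norm u i) (norm_le_pi_norm v i)

lemma padic_pi_norm_sub_le_max {n : ℕ} (a b c : Fin n → ℚ_[p]) :
    ‖a - c‖ ≤ max ‖a - b‖ ‖b - c‖ := by
  have h : a - c = (a - b) + (b - c) := by abel
  rw [h]; exact padic_pi_norm_add_le_max _ _

lemma padic_norm_sub_le_max (a b c : ℚ_[p]) :
    ‖a - c‖ ≤ max ‖a - b‖ ‖b - c‖ := by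
  have h : a - c = (a - b) + (b - c) := by abel
  rw [h]; exact IsUltrametricDist.norm_add_le_max _ _

lemma padicHaar_closedBall_one : padicHaar p (closedBall 0 1) = 1 :=
  Measure.addHaarMeasure_self (K₀ := zpCompacts p)

lemma padicHaar_closedBall_center (a : ℚ_[p]) (r : ℝ) :
    padicHaar p (closedBall a r) = padicHaar p (closedBall 0 r) := by
  have h : closedBall a r = (fun x : ℚ_[p] => x + (-a)) ⁻¹' (closedBall 0 r) := by
    ext x
    simp [mem_closedBall, dist_eq_norm, sub_eq_add_neg]
  rw [h, measure_preimage_add_right]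

lemma padicHaar_closedBall_pow (j : ℕ) :
    padicHaar p (closedBall (0 : ℚ_[p]) ((p : ℝ) ^ j)) = (p : ℝ≥0∞) ^ j := by
  have hp : p.Prime := Fact.out
  have hp1 : (1 : ℝ) < p := by exact_mod_cast hp.one_lt
  have hp0 : (p : ℚ_[p]) ≠ 0 := by
    exact_mod_cast (Nat.cast_ne_zero (R := ℚ_[p])).2 hp.ne_zero
  set pr : ℚ_[p] := ((p : ℚ_[p]) ^ j)⁻¹ with hprD
  have hpr : ‖pr‖ = (p : ℝ) ^ j := by
    rw [hprD, norm_inv, norm_pow, Padic.norm_p, ← inv_pow, inv_inv]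
  have hcover : closedBall (0 : ℚ_[p]) ((p : ℝ) ^ j)
      = ⋃ c ∈ Finset.range (p ^ j), closedBall ((c : ℚ_[p]) * pr) 1 := by
    ext x
    simp only [mem_closedBall, dist_eq_norm, sub_zero, Set.mem_iUnion, Finset.mem_range,
      exists_prop]
    constructor
    · intro hx
      have hy : ‖(p : ℚ_[p]) ^ j * x‖ ≤ 1 := by
        rw [norm_mul, norm_pow, Padic.norm_p, inv_pow]
        calc ((p:ℝ)^j)⁻¹ * ‖x‖ ≤ ((p:ℝ)^j)⁻¹ * (p:ℝ)^j := by
              apply mul_le_mul_of_nonneg_left hx (by positivity)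
          _ = 1 := inv_mul_cancel₀ (by positivity)
      set y : ℤ_[p] := ⟨(p : ℚ_[p]) ^ j * x, hy⟩ with hydef
      refine ⟨y.appr j, PadicInt.appr_lt y j, ?_⟩
      have hspec := PadicInt.appr_spec j y
      rw [Ideal.mem_span_singleton] at hspec
      obtain ⟨z, hz⟩ := hspec
      have hz' : (p : ℚ_[p]) ^ j * x - (y.appr j : ℚ_[p]) = (p : ℚ_[p]) ^ j * (z : ℚ_[p]) := by
        have := congrArg (fun t : ℤ_[p] => (t : ℚ_[p])) hz
        push_cast at this
        simpa [hydef] using this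
      have hnorm : ‖x - (y.appr j : ℚ_[p]) * pr‖ ≤ 1 := by
        have hxeq : x - (y.appr j : ℚ_[p]) * pr = pr * ((p : ℚ_[p]) ^ j * x - (y.appr j : ℚ_[p])) := by
          rw [mul_sub, ← mul_assoc, hprD, inv_mul_cancel₀ (pow_ne_zero _ hp0), one_mul]
          ring
        rw [hxeq, hz', norm_mul, norm_mul, hpr, norm_pow, Padic.norm_p, inv_pow]
        calc (p:ℝ)^j * (((p:ℝ)^j)⁻¹ * ‖(z : ℚ_[p])‖) ≤ (p:ℝ)^j * (((p:ℝ)^j)⁻¹ * 1) := by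
              apply mul_le_mul_of_nonneg_left _ (by positivity)
              exact mul_le_mul_of_nonneg_left (PadicInt.norm_le_one z) (by positivity)
          _ = 1 := by field_simp
      exact hnorm
    · intro ⟨c, hc, hxc⟩
      have hcn : ‖(c : ℚ_[p])‖ ≤ 1 := by
        have : ((c : ℤ) : ℚ_[p]) = (c : ℚ_[p]) := by push_cast; ring
        rw [← this]; exact Padic.norm_int_le_one _
      have h1 : ‖x‖ ≤ max ‖x - (c : ℚ_[p]) * pr‖ ‖(c : ℚ_[p]) * pr‖ := by
        have := padic_norm_sub_le_max x ((c : ℚ_[p]) * pr) 0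
        simpa using this
      have h2 : ‖(c : ℚ_[p]) * pr‖ ≤ (p : ℝ) ^ j := by
        rw [norm_mul, hpr]
        calc ‖(c:ℚ_[p])‖ * (p:ℝ)^j ≤ 1 * (p:ℝ)^j := by
              apply mul_le_mul_of_nonneg_right hcn (by positivity)
          _ = (p:ℝ)^j := one_mul _
      refine h1.trans (max_le (hxc.trans (one_le_pow₀ hp1.le)) h2)
  have hdisj : Set.Pairwise (↑(Finset.range (p ^ j)) : Set ℕ)
      (Function.onFun Disjoint fun c => closedBall ((c : ℚ_[p]) * pr) 1) := by
    intro c hc d hd hcd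
    simp only [Finset.coe_range, Set.mem_Iio] at hc hd
    rw [Function.onFun, Set.disjoint_left]
    intro x hx1 hx2
    rw [mem_closedBall, dist_eq_norm] at hx1 hx2
    have h1 : ‖(c : ℚ_[p]) * pr - (d : ℚ_[p]) * pr‖ ≤ 1 := by
      refine (padic_norm_sub_le_max _ x _).trans (max_le ?_ hx2)
      rw [norm_sub_rev]; exact hx1
    have h2 : ((c : ℚ_[p]) - d) * pr = ((c - d : ℤ) : ℚ_[p]) * pr := by push_cast; ring
    have h3 : ‖((c - d : ℤ) : ℚ_[p])‖ ≤ (p : ℝ) ^ (-(j : ℤ)) := by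
      have h4 : ‖((c - d : ℤ) : ℚ_[p])‖ * (p : ℝ) ^ j ≤ 1 := by
        calc ‖((c - d : ℤ) : ℚ_[p])‖ * (p : ℝ) ^ j = ‖((c - d : ℤ) : ℚ_[p]) * pr‖ := by
              rw [norm_mul, hpr]
          _ = ‖(c : ℚ_[p]) * pr - (d : ℚ_[p]) * pr‖ := by rw [← h2, sub_mul]
          _ ≤ 1 := h1
      rw [zpow_neg, zpow_natCast]
      rw [← (le_div_iff₀ (by positivity : (0:ℝ) < (p:ℝ)^j))] at h4
      simpa [one_div] using h4
    rw [Padic.norm_int_le_pow_iff_dvd] at h3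
    have h5 : (c - d : ℤ) = 0 := Int.eq_zero_of_abs_lt_dvd h3 (by
      have hcj : (c : ℤ) < (p : ℤ) ^ j := by exact_mod_cast hc
      have hdj : (d : ℤ) < (p : ℤ) ^ j := by exact_mod_cast hd
      rw [abs_lt]
      constructor <;> omega)
    exact hcd (by omega)
  rw [hcover, measure_biUnion_finset hdisj (fun c _ => measurableSet_closedBall)]
  have hone : ∀ c ∈ Finset.range (p ^ j),
      padicHaar p (closedBall ((c : ℚ_[p]) * pr) 1) = 1 := by
    intro c _
    rw [padicHaar_closedBall_center, padicHaar_closedBall_one]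
  rw [Finset.sum_congr rfl hone]
  simp [Finset.card_range]

lemma padicHaarPi_closedBall (n j : ℕ) :
    padicHaarPi p n (closedBall (0 : Fin n → ℚ_[p]) ((p : ℝ) ^ j)) = ((p : ℝ≥0∞) ^ j) ^ n := by
  rw [closedBall_pi _ (by positivity), padicHaarPi, Measure.pi_pi]
  simp [padicHaar_closedBall_pow]

lemma padic_pi_exists_norm_eq {n : ℕ} (hn : 1 ≤ n) (u : Fin n → ℚ_[p]) (hu : u ≠ 0) :
    ∃ k : ℤ, ‖u‖ = (p : ℝ) ^ k := by
  have : Nonempty (Fin n) := ⟨⟨0, hn⟩⟩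
  obtain ⟨i, -, hi⟩ := Finset.exists_mem_eq_sup (Finset.univ : Finset (Fin n))
    Finset.univ_nonempty (fun i => ‖u i‖₊)
  have hnorm : ‖u‖ = ‖u i‖ := by
    rw [Pi.norm_def, hi]; rfl
  have hui : u i ≠ 0 := by
    intro h0
    apply hu
    have hz : ‖u‖ = 0 := by rw [hnorm, h0, norm_zero]
    exact norm_eq_zero.mp hz
  exact ⟨-(u i).valuation, by rw [hnorm, Padic.norm_eq_zpow_neg_valuation hui]⟩

lemma tail_lintegral_lt_top (n m : ℕ) (hn : 1 ≤ n) (σ : ℝ) (hσ : 0 < σ) :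
    ∫⁻ u : Fin n → ℚ_[p], Set.indicator {u : Fin n → ℚ_[p] | (p : ℝ) ^ (-(m : ℤ)) < ‖u‖}
      (fun u => ENNReal.ofReal (‖u‖ ^ (-σ - (n : ℝ)))) u ∂(padicHaarPi p n) < ⊤ := by
  have hp : p.Prime := Fact.out
  have hp1 : (1 : ℝ) < p := by exact_mod_cast hp.one_lt
  have hp0 : (0 : ℝ) < p := by positivity
  set S : Set (Fin n → ℚ_[p]) := {u | (p : ℝ) ^ (-(m : ℤ)) < ‖u‖} with hSdef
  set A : ℕ → Set (Fin n → ℚ_[p]) := fun j => {u | ‖u‖ = (p : ℝ) ^ ((j : ℤ) - (m : ℤ))}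
    with hAdef
  have hSm : MeasurableSet S :=
    measurableSet_lt measurable_const continuous_norm.measurable
  have hsub : S ⊆ ⋃ j : ℕ, A j := by
    intro u hu
    have hu0 : u ≠ 0 := by
      intro h0
      rw [hSdef] at hu
      simp only [h0, norm_zero, Set.mem_setOf_eq] at hu
      exact absurd hu (not_lt.mpr (by positivity))
    obtain ⟨k, hk⟩ := padic_pi_exists_norm_eq hn u hu0
    have hkm : -(m : ℤ) < k := by
      by_contra hc
      push_neg at hc
      have := (zpow_le_zpow_right₀ hp1.le hc)
      rw [hSdef, Set.mem_setOf_eq, hk] at hu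
      exact absurd (hu.trans_le this) (lt_irrefl _)
    refine Set.mem_iUnion.2 ⟨(k + m).toNat, ?_⟩
    rw [hAdef]
    simp only [Set.mem_setOf_eq, hk]
    congr 1
    omega
  have hmeas : ∀ j, MeasurableSet (A j) := fun j =>
    measurableSet_eq_fun continuous_norm.measurable measurable_const
  have hAle : ∀ j, padicHaarPi p n (A j) ≤ ((p : ℝ≥0∞) ^ j) ^ n := by
    intro j
    rw [← padicHaarPi_closedBall]
    apply measure_mono
    intro u hu
    rw [hAdef] at hu
    simp only [Set.mem_setOf_eq] at hu
    rw [mem_closedBall, dist_zero_right, hu]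
    calc (p : ℝ) ^ ((j : ℤ) - m) ≤ (p : ℝ) ^ (j : ℤ) := zpow_le_zpow_right₀ hp1.le (by omega)
      _ = (p : ℝ) ^ j := zpow_natCast _ _
  -- per-shell bound
  have hshell : ∀ j : ℕ, (∫⁻ u in A j, ENNReal.ofReal (‖u‖ ^ (-σ - (n : ℝ))) ∂(padicHaarPi p n))
      ≤ ENNReal.ofReal ((p : ℝ) ^ ((m : ℝ) * (σ + n))) * ENNReal.ofReal ((p : ℝ) ^ (-σ)) ^ j := by
    intro j
    have hconst : ∀ u ∈ A j, ENNReal.ofReal (‖u‖ ^ (-σ - (n : ℝ)))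
        ≤ ENNReal.ofReal (((p : ℝ) ^ ((j : ℤ) - m)) ^ (-σ - (n : ℝ))) := by
      intro u hu
      rw [hAdef] at hu
      simp only [Set.mem_setOf_eq] at hu
      rw [hu]
    calc (∫⁻ u in A j, ENNReal.ofReal (‖u‖ ^ (-σ - (n : ℝ))) ∂(padicHaarPi p n))
        ≤ ∫⁻ _ in A j, ENNReal.ofReal (((p : ℝ) ^ ((j : ℤ) - m)) ^ (-σ - (n : ℝ)))
            ∂(padicHaarPi p n) := setLIntegral_mono measurable_const hconst
      _ = ENNReal.ofReal (((p : ℝ) ^ ((j : ℤ) - m)) ^ (-σ - (n : ℝ))) * padicHaarPi p n (A j) :=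
          setLIntegral_const _ _
      _ ≤ ENNReal.ofReal (((p : ℝ) ^ ((j : ℤ) - m)) ^ (-σ - (n : ℝ))) * ((p : ℝ≥0∞) ^ j) ^ n := by
          exact mul_le_mul_right (hAle j) _
      _ = ENNReal.ofReal ((p : ℝ) ^ ((m : ℝ) * (σ + n))) * ENNReal.ofReal ((p : ℝ) ^ (-σ)) ^ j := by
          have hcast : ((p : ℝ≥0∞) ^ j) ^ n = ENNReal.ofReal (((p : ℝ) ^ j) ^ n) := by
            rw [ENNReal.ofReal_pow (by positivity), ENNReal.ofReal_pow hp0.le,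
              ENNReal.ofReal_natCast]
          rw [hcast, ← ENNReal.ofReal_mul (by positivity), ← ENNReal.ofReal_pow (by positivity),
            ← ENNReal.ofReal_mul (by positivity)]
          congr 1
          have e1 : ((p : ℝ) ^ ((j : ℤ) - m)) = (p : ℝ) ^ (((j : ℝ) - m)) := by
            rw [← Real.rpow_intCast (p : ℝ) ((j : ℤ) - m)]
            push_cast
            ring_nf
          have e2 : ((p : ℝ) ^ j) ^ n = (p : ℝ) ^ ((j : ℝ) * n) := by
            rw [← Real.rpow_natCast (p : ℝ) j, ← Real.rpow_natCast _ n, ← Real.rpow_mul hp0.le]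
          have e3 : ((p : ℝ) ^ (-σ)) ^ j = (p : ℝ) ^ ((-σ) * j) := by
            rw [← Real.rpow_natCast ((p : ℝ) ^ (-σ)) j, ← Real.rpow_mul hp0.le]
          rw [e1, e2, e3, ← Real.rpow_mul hp0.le, ← Real.rpow_add hp0, ← Real.rpow_add hp0]
          congr 1
          ring
  have hgeom : (ENNReal.ofReal ((p : ℝ) ^ (-σ))) < 1 := by
    rw [← ENNReal.ofReal_one]
    exact ENNReal.ofReal_lt_ofReal_iff_of_nonneg (by positivity) |>.2
      (Real.rpow_lt_one_of_one_lt_of_neg hp1 (by linarith))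
  calc ∫⁻ u, Set.indicator S (fun u => ENNReal.ofReal (‖u‖ ^ (-σ - (n : ℝ)))) u
        ∂(padicHaarPi p n)
      = ∫⁻ u in S, ENNReal.ofReal (‖u‖ ^ (-σ - (n : ℝ))) ∂(padicHaarPi p n) :=
        lintegral_indicator hSm _
    _ ≤ ∫⁻ u in ⋃ j : ℕ, A j, ENNReal.ofReal (‖u‖ ^ (-σ - (n : ℝ))) ∂(padicHaarPi p n) :=
        lintegral_mono_set hsub
    _ ≤ ∑' j : ℕ, ∫⁻ u in A j, ENNReal.ofReal (‖u‖ ^ (-σ - (n : ℝ))) ∂(padicHaarPi p n) :=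
        lintegral_iUnion_le _ _
    _ ≤ ∑' j : ℕ, ENNReal.ofReal ((p : ℝ) ^ ((m : ℝ) * (σ + n)))
          * ENNReal.ofReal ((p : ℝ) ^ (-σ)) ^ j := ENNReal.tsum_le_tsum hshell
    _ = ENNReal.ofReal ((p : ℝ) ^ ((m : ℝ) * (σ + n)))
          * ∑' j : ℕ, ENNReal.ofReal ((p : ℝ) ^ (-σ)) ^ j := ENNReal.tsum_mul_left
    _ = ENNReal.ofReal ((p : ℝ) ^ ((m : ℝ) * (σ + n)))
          * (1 - ENNReal.ofReal ((p : ℝ) ^ (-σ)))⁻¹ := by rw [ENNReal.tsum_geometric]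
    _ < ⊤ := by
        apply ENNReal.mul_lt_top ENNReal.ofReal_lt_top
        rw [lt_top_iff_ne_top]
        apply ENNReal.inv_ne_top.2
        intro h0
        rw [tsub_eq_zero_iff_le] at h0
        exact absurd (lt_of_lt_of_le hgeom h0) (lt_irrefl _)

lemma exists_uniform_radius {n : ℕ} (ψ : (Fin n → ℚ_[p]) → ℂ)
    (hloc : IsLocallyConstant ψ) (hsupp : HasCompactSupport ψ) :
    ∃ m : ℕ, ∀ x z : Fin n → ℚ_[p], ‖z - x‖ ≤ (p : ℝ) ^ (-(m : ℤ)) → ψ z = ψ x := by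
  have hp : p.Prime := Fact.out
  have hp1 : (1 : ℝ) < p := by exact_mod_cast hp.one_lt
  have key : ∀ x : Fin n → ℚ_[p], ∃ ε, 0 < ε ∧ ∀ y ∈ ball x ε, ψ y = ψ x := by
    intro x
    have hopen : IsOpen (ψ ⁻¹' {ψ x}) := hloc {ψ x}
    obtain ⟨ε, hε, hball⟩ := Metric.isOpen_iff.1 hopen x (by simp)
    exact ⟨ε, hε, fun y hy => hball hy⟩
  choose ε hε0 hεconst using key
  obtain ⟨t, hts, htfin, htcov⟩ := hsupp.elim_finite_subcover_image
    (fun x _ => isOpen_ball) (fun x hx => Set.mem_biUnion hx (mem_ball_self (hε0 x)))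
  rcases htfin.toFinset.eq_empty_or_nonempty with hemp | hne
  · refine ⟨0, fun x z _ => ?_⟩
    have hzero : ∀ w, ψ w = 0 := by
      intro w
      apply image_eq_zero_of_notMem_tsupport
      intro hw
      obtain ⟨i, hit, -⟩ := Set.mem_iUnion₂.1 (htcov hw)
      have : i ∈ htfin.toFinset := htfin.mem_toFinset.2 hit
      simp [hemp] at this
    rw [hzero x, hzero z]
  · set δ₀ : ℝ := htfin.toFinset.inf' hne ε with hδ₀def
    have hδ₀pos : 0 < δ₀ := by
      rw [hδ₀def, Finset.lt_inf'_iff]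
      exact fun i _ => hε0 i
    obtain ⟨m, hm⟩ := exists_pow_lt_of_lt_one hδ₀pos
      (by rw [inv_lt_one_iff₀]; right; exact hp1 : (p : ℝ)⁻¹ < 1)
    have hmδ : (p : ℝ) ^ (-(m : ℤ)) < δ₀ := by
      rw [zpow_neg, zpow_natCast, ← inv_pow]
      exact hm
    refine ⟨m, fun x z hzx => ?_⟩
    have hzxδ : ‖z - x‖ < δ₀ := lt_of_le_of_lt hzx hmδ
    by_cases hx : x ∈ ⋃ i ∈ t, ball i (ε i)
    · obtain ⟨i, hit, hxi⟩ := Set.mem_iUnion₂.1 hx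
      have hiF : i ∈ htfin.toFinset := htfin.mem_toFinset.2 hit
      have hδi : δ₀ ≤ ε i := Finset.inf'_le _ hiF
      rw [mem_ball, dist_eq_norm] at hxi
      have hzi : z ∈ ball i (ε i) := by
        rw [mem_ball, dist_eq_norm]
        exact lt_of_le_of_lt (padic_pi_norm_sub_le_max z x i)
          (max_lt (lt_of_lt_of_le hzxδ hδi) hxi)
      rw [hεconst i z hzi, hεconst i x (by rw [mem_ball, dist_eq_norm]; exact hxi)]
    · have hxs : x ∉ tsupport ψ := fun h => hx (htcov h)
      have hzs : z ∉ tsupport ψ := by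
        intro hz
        obtain ⟨i, hit, hzi⟩ := Set.mem_iUnion₂.1 (htcov hz)
        have hiF : i ∈ htfin.toFinset := htfin.mem_toFinset.2 hit
        have hδi : δ₀ ≤ ε i := Finset.inf'_le _ hiF
        rw [mem_ball, dist_eq_norm] at hzi
        apply hx
        refine Set.mem_iUnion₂.2 ⟨i, hit, ?_⟩
        rw [mem_ball, dist_eq_norm]
        refine lt_of_le_of_lt (padic_pi_norm_sub_le_max x z i) (max_lt ?_ hzi)
        rw [norm_sub_rev]
        exact lt_of_lt_of_le hzxδ hδi
      rw [image_eq_zero_of_notMem_tsupport hxs, image_eq_zero_of_notMem_tsupport hzs]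

lemma kernel_measurable {n : ℕ} (c : ℂ) :
    Measurable (fun q : (Fin n → ℚ_[p]) × (Fin n → ℚ_[p]) => ((‖q.2 - q.1‖ : ℝ) : ℂ) ^ c) := by
  have h1 : Measurable (fun q : (Fin n → ℚ_[p]) × (Fin n → ℚ_[p]) => ((‖q.2 - q.1‖ : ℝ) : ℂ)) :=
    Complex.measurable_ofReal.comp (continuous_snd.sub continuous_fst).norm.measurable
  exact h1.pow measurable_const

lemma integrable_of_kernel_bound {n m : ℕ} (hn : 1 ≤ n) {s : ℂ} (hs : 0 < s.re)
    (R C : ℝ) (hC : 0 ≤ C) (φ : (Fin n → ℚ_[p]) × (Fin n → ℚ_[p]) → ℂ)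
    (hmeas : AEStronglyMeasurable φ ((padicHaarPi p n).prod (padicHaarPi p n)))
    (hb : ∀ q : (Fin n → ℚ_[p]) × (Fin n → ℚ_[p]), φ q ≠ 0 →
      (p : ℝ) ^ (-(m : ℤ)) < ‖q.2 - q.1‖ ∧ (‖q.1‖ ≤ R ∨ ‖q.2‖ ≤ R) ∧
      ‖φ q‖ ≤ C * ‖q.2 - q.1‖ ^ (-s.re - (n : ℝ))) :
    Integrable φ ((padicHaarPi p n).prod (padicHaarPi p n)) := by
  have hp : p.Prime := Fact.out
  have hp1 : (1 : ℝ) < p := by exact_mod_cast hp.one_lt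
  set μn := padicHaarPi p n with hμn
  set Sδ : Set (Fin n → ℚ_[p]) := {u | (p : ℝ) ^ (-(m : ℤ)) < ‖u‖} with hSδ
  have hSδm : MeasurableSet Sδ := measurableSet_lt measurable_const continuous_norm.measurable
  set T : (Fin n → ℚ_[p]) → ℝ := Set.indicator Sδ (fun u => C * ‖u‖ ^ (-s.re - (n : ℝ))) with hT
  have hTnn : ∀ u, 0 ≤ T u := by
    intro u
    rw [hT]
    apply Set.indicator_nonneg
    intro u hu
    have : (0:ℝ) < ‖u‖ := lt_trans (by positivity) hu
    positivity
  have hTmeas : Measurable T := by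
    apply Measurable.indicator _ hSδm
    exact measurable_const.mul (measurable_norm.pow measurable_const)
  set B : Set (Fin n → ℚ_[p]) := closedBall 0 R with hB
  have hBm : MeasurableSet B := measurableSet_closedBall
  have hBfin : μn B < ⊤ := by
    rcases le_or_gt 0 R with hR | hR
    · exact (isCompact_closedBall _ _).measure_lt_top
    · rw [hB, closedBall_eq_empty.2 hR]
      simp
  -- the one-sided dominating function
  set H₁ : (Fin n → ℚ_[p]) × (Fin n → ℚ_[p]) → ℝ := fun q => Set.indicator B (fun _ => (1:ℝ)) q.1 * T (q.2 - q.1) with hH₁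
  have hH₁meas : Measurable H₁ := by
    apply Measurable.mul
    · exact (measurable_const.indicator hBm).comp measurable_fst
    · exact hTmeas.comp (measurable_snd.sub measurable_fst)
  have hH₁nn : ∀ q, 0 ≤ H₁ q := by
    intro q
    apply mul_nonneg _ (hTnn _)
    exact Set.indicator_nonneg (fun _ _ => zero_le_one) _
  -- J : the translation-invariant tail integral
  set J : ℝ≥0∞ := ∫⁻ u : (Fin n → ℚ_[p]), ENNReal.ofReal (T u) ∂μn with hJ
  have hJfin : J < ⊤ := by
    have hle : ∀ u : (Fin n → ℚ_[p]), ENNReal.ofReal (T u)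
        ≤ ENNReal.ofReal C * Set.indicator Sδ
          (fun u => ENNReal.ofReal (‖u‖ ^ (-s.re - (n : ℝ)))) u := by
      intro u
      rw [hT]
      by_cases hu : u ∈ Sδ
      · rw [Set.indicator_of_mem hu, Set.indicator_of_mem hu,
          ENNReal.ofReal_mul hC]
      · rw [Set.indicator_of_notMem hu, Set.indicator_of_notMem hu]
        simp
    calc J ≤ ∫⁻ u : (Fin n → ℚ_[p]), ENNReal.ofReal C * Set.indicator Sδ
          (fun u => ENNReal.ofReal (‖u‖ ^ (-s.re - (n : ℝ)))) u ∂μn := lintegral_mono hle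
      _ = ENNReal.ofReal C * ∫⁻ u : (Fin n → ℚ_[p]), Set.indicator Sδ
          (fun u => ENNReal.ofReal (‖u‖ ^ (-s.re - (n : ℝ)))) u ∂μn :=
          lintegral_const_mul' _ _ ENNReal.ofReal_ne_top
      _ < ⊤ := ENNReal.mul_lt_top ENNReal.ofReal_lt_top
          (tail_lintegral_lt_top n m hn s.re hs)
  have hTsymm : ∀ u : (Fin n → ℚ_[p]), T (-u) = T u := by
    intro u
    rw [hT]
    by_cases hu : u ∈ Sδ
    · have hu' : -u ∈ Sδ := by
        rw [hSδ] at hu ⊢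
        simpa [norm_neg] using hu
      rw [Set.indicator_of_mem hu, Set.indicator_of_mem hu', norm_neg]
    · have hu' : -u ∉ Sδ := by
        rw [hSδ] at hu ⊢
        simpa [norm_neg] using hu
      rw [Set.indicator_of_notMem hu, Set.indicator_of_notMem hu']
  have hH₁int : Integrable H₁ (μn.prod μn) := by
    constructor
    · exact hH₁meas.aestronglyMeasurable
    · rw [hasFiniteIntegral_iff_norm]
      have hcalc : ∫⁻ q : (Fin n → ℚ_[p]) × (Fin n → ℚ_[p]), ENNReal.ofReal ‖H₁ q‖ ∂(μn.prod μn)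
          = ∫⁻ x : (Fin n → ℚ_[p]), ∫⁻ z : (Fin n → ℚ_[p]), ENNReal.ofReal ‖H₁ (x, z)‖ ∂μn ∂μn :=
        lintegral_prod _ (hH₁meas.norm.ennreal_ofReal.aemeasurable)
      rw [hcalc]
      have hinner : ∀ x : (Fin n → ℚ_[p]), (∫⁻ z : (Fin n → ℚ_[p]), ENNReal.ofReal ‖H₁ (x, z)‖ ∂μn)
          = Set.indicator B (fun _ => (1:ℝ≥0∞)) x * J := by
        intro x
        have hstep : ∀ z : (Fin n → ℚ_[p]), ENNReal.ofReal ‖H₁ (x, z)‖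
            = Set.indicator B (fun _ => (1:ℝ≥0∞)) x * ENNReal.ofReal (T (z - x)) := by
          intro z
          rw [Real.norm_of_nonneg (hH₁nn (x, z))]
          have : H₁ (x, z) = Set.indicator B (fun _ => (1:ℝ)) x * T (z - x) := rfl
          rw [this, ENNReal.ofReal_mul (Set.indicator_nonneg (fun _ _ => zero_le_one) _)]
          congr 1
          by_cases hx : x ∈ B
          · rw [Set.indicator_of_mem hx, Set.indicator_of_mem hx]; simp
          · rw [Set.indicator_of_notMem hx, Set.indicator_of_notMem hx]; simp
        simp_rw [hstep]
        rw [lintegral_const_mul' _ _ (by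
          by_cases hx : x ∈ B
          · rw [Set.indicator_of_mem hx]; exact ENNReal.one_ne_top
          · rw [Set.indicator_of_notMem hx]; exact ENNReal.zero_ne_top)]
        congr 1
        have htrans : ∀ z : (Fin n → ℚ_[p]), (fun u : (Fin n → ℚ_[p]) => ENNReal.ofReal (T u)) (z + (-x))
            = ENNReal.ofReal (T (z - x)) := by
          intro z; rw [sub_eq_add_neg]
        calc (∫⁻ z : (Fin n → ℚ_[p]), ENNReal.ofReal (T (z - x)) ∂μn)
            = ∫⁻ z : (Fin n → ℚ_[p]), (fun u : (Fin n → ℚ_[p]) => ENNReal.ofReal (T u)) (z + (-x)) ∂μn := by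
              simp_rw [htrans]
          _ = ∫⁻ u : (Fin n → ℚ_[p]), ENNReal.ofReal (T u) ∂μn :=
              lintegral_add_right_eq_self (fun u : (Fin n → ℚ_[p]) => ENNReal.ofReal (T u)) (-x)
          _ = J := hJ.symm
      simp_rw [hinner]
      have hfin : (∫⁻ x : (Fin n → ℚ_[p]), Set.indicator B (fun _ => (1:ℝ≥0∞)) x * J ∂μn) = J * μn B := by
        have : ∀ x : (Fin n → ℚ_[p]), Set.indicator B (fun _ => (1:ℝ≥0∞)) x * J
            = Set.indicator B (fun _ => J) x := by
          intro x
          by_cases hx : x ∈ B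
          · rw [Set.indicator_of_mem hx, Set.indicator_of_mem hx, one_mul]
          · rw [Set.indicator_of_notMem hx, Set.indicator_of_notMem hx, zero_mul]
        simp_rw [this]
        rw [lintegral_indicator hBm, setLIntegral_const]
      rw [hfin]
      exact ENNReal.mul_lt_top hJfin hBfin
  have hH₂int : Integrable (H₁ ∘ Prod.swap) (μn.prod μn) := hH₁int.swap
  refine Integrable.mono' (hH₁int.add hH₂int) hmeas (Filter.Eventually.of_forall ?_)
  intro q
  by_cases hq : φ q = 0
  · rw [hq, norm_zero]
    exact add_nonneg (hH₁nn q) (hH₁nn q.swap)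
  · obtain ⟨h1, h2, h3⟩ := hb q hq
    have hmemδ : q.2 - q.1 ∈ Sδ := h1
    have hTval : T (q.2 - q.1) = C * ‖q.2 - q.1‖ ^ (-s.re - (n : ℝ)) :=
      Set.indicator_of_mem hmemδ _
    have hφT : ‖φ q‖ ≤ T (q.2 - q.1) := by rw [hTval]; exact h3
    rcases h2 with h2 | h2
    · have hq1 : q.1 ∈ B := by rw [hB, mem_closedBall, dist_zero_right]; exact h2
      have : H₁ q = T (q.2 - q.1) := by
        show Set.indicator B (fun _ => (1:ℝ)) q.1 * T (q.2 - q.1) = _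
        rw [Set.indicator_of_mem hq1, one_mul]
      calc ‖φ q‖ ≤ H₁ q := by rw [this]; exact hφT
        _ ≤ H₁ q + H₁ q.swap := le_add_of_nonneg_right (hH₁nn q.swap)
    · have hq2 : q.2 ∈ B := by rw [hB, mem_closedBall, dist_zero_right]; exact h2
      have hswap : H₁ q.swap = T (q.2 - q.1) := by
        show Set.indicator B (fun _ => (1:ℝ)) q.2 * T (q.1 - q.2) = _
        rw [Set.indicator_of_mem hq2, one_mul, ← neg_sub q.2 q.1, hTsymm]
      calc ‖φ q‖ ≤ H₁ q.swap := by rw [hswap]; exact hφT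
        _ ≤ H₁ q + H₁ q.swap := le_add_of_nonneg_left (hH₁nn q)


/-- formal self-adjointness of the max-norm Vladimirov derivative on `ℚ_p^n`:
for Schwartz–Bruhat functions `ψ₁, ψ₂` the (absolutely convergent) double integrals satisfy
`∫∫ ψ₁(x)(ψ₂(z) - ψ₂(x))|z-x|_n^{-s-n} = -(1/2)·∫∫ (ψ₁(z) - ψ₁(x))(ψ₂(z) - ψ₂(x))|z-x|_n^{-s-n}`. -/
theorem vladimirov_self_adjoint_pi (n : ℕ) (hn : 1 ≤ n) (s : ℂ) (hs : 0 < s.re)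
    (ψ₁ ψ₂ : (Fin n → ℚ_[p]) → ℂ)
    (hψ₁loc : IsLocallyConstant ψ₁) (hψ₁supp : HasCompactSupport ψ₁)
    (hψ₂loc : IsLocallyConstant ψ₂) (hψ₂supp : HasCompactSupport ψ₂) :
    Integrable (fun q : (Fin n → ℚ_[p]) × (Fin n → ℚ_[p]) =>
      ψ₁ q.1 * (ψ₂ q.2 - ψ₂ q.1) * (‖q.2 - q.1‖ : ℂ) ^ (-s - (n : ℂ)))
      ((padicHaarPi p n).prod (padicHaarPi p n)) ∧
    Integrable (fun q : (Fin n → ℚ_[p]) × (Fin n → ℚ_[p]) =>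
      (ψ₁ q.2 - ψ₁ q.1) * (ψ₂ q.2 - ψ₂ q.1) * (‖q.2 - q.1‖ : ℂ) ^ (-s - (n : ℂ)))
      ((padicHaarPi p n).prod (padicHaarPi p n)) ∧
    (∫ x, ∫ z, ψ₁ x * (ψ₂ z - ψ₂ x) * (‖z - x‖ : ℂ) ^ (-s - (n : ℂ))
        ∂(padicHaarPi p n) ∂(padicHaarPi p n))
      = -(1 / 2) *
        ∫ x, ∫ z, (ψ₁ z - ψ₁ x) * (ψ₂ z - ψ₂ x) * (‖z - x‖ : ℂ) ^ (-s - (n : ℂ))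
          ∂(padicHaarPi p n) ∂(padicHaarPi p n) := by
  classical
  have hp : p.Prime := Fact.out
  have hp1 : (1 : ℝ) < p := by exact_mod_cast hp.one_lt
  set c : ℂ := -s - (n : ℂ) with hc
  have hcre : c.re = -s.re - (n : ℝ) := by
    rw [hc]
    simp [Complex.sub_re, Complex.neg_re]
  -- uniform local constancy radii
  obtain ⟨m₁, hm₁⟩ := exists_uniform_radius ψ₁ hψ₁loc hψ₁supp
  obtain ⟨m₂, hm₂⟩ := exists_uniform_radius ψ₂ hψ₂loc hψ₂supp
  set m : ℕ := max m₁ m₂ with hm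
  have hδle₁ : (p : ℝ) ^ (-(m : ℤ)) ≤ (p : ℝ) ^ (-(m₁ : ℤ)) :=
    zpow_le_zpow_right₀ hp1.le (by omega)
  have hδle₂ : (p : ℝ) ^ (-(m : ℤ)) ≤ (p : ℝ) ^ (-(m₂ : ℤ)) :=
    zpow_le_zpow_right₀ hp1.le (by omega)
  have hm₁' : ∀ x z : Fin n → ℚ_[p], ‖z - x‖ ≤ (p : ℝ) ^ (-(m : ℤ)) → ψ₁ z = ψ₁ x :=
    fun x z h => hm₁ x z (h.trans hδle₁)
  have hm₂' : ∀ x z : Fin n → ℚ_[p], ‖z - x‖ ≤ (p : ℝ) ^ (-(m : ℤ)) → ψ₂ z = ψ₂ x :=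
    fun x z h => hm₂ x z (h.trans hδle₂)
  -- bounds
  obtain ⟨M₁, hM₁⟩ := hψ₁loc.continuous.bounded_above_of_compact_support hψ₁supp
  obtain ⟨M₂, hM₂⟩ := hψ₂loc.continuous.bounded_above_of_compact_support hψ₂supp
  have hM₁nn : 0 ≤ M₁ := (norm_nonneg _).trans (hM₁ 0)
  have hM₂nn : 0 ≤ M₂ := (norm_nonneg _).trans (hM₂ 0)
  -- support radius
  obtain ⟨R₀, hR₀⟩ := ((hψ₁supp.union hψ₂supp) :
    IsCompact (tsupport ψ₁ ∪ tsupport ψ₂)).isBounded.subset_closedBall 0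
  have hsupp₁ : ∀ x : Fin n → ℚ_[p], ψ₁ x ≠ 0 → ‖x‖ ≤ R₀ := by
    intro x hx
    have := hR₀ (Set.mem_union_left _ (subset_tsupport ψ₁ hx))
    rwa [mem_closedBall, dist_zero_right] at this
  have hsupp₂ : ∀ x : Fin n → ℚ_[p], ψ₂ x ≠ 0 → ‖x‖ ≤ R₀ := by
    intro x hx
    have := hR₀ (Set.mem_union_right _ (subset_tsupport ψ₂ hx))
    rwa [mem_closedBall, dist_zero_right] at this
  set φ₁ : (Fin n → ℚ_[p]) × (Fin n → ℚ_[p]) → ℂ := fun q =>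
    ψ₁ q.1 * (ψ₂ q.2 - ψ₂ q.1) * (‖q.2 - q.1‖ : ℂ) ^ c with hφ₁
  set φ₂ : (Fin n → ℚ_[p]) × (Fin n → ℚ_[p]) → ℂ := fun q =>
    (ψ₁ q.2 - ψ₁ q.1) * (ψ₂ q.2 - ψ₂ q.1) * (‖q.2 - q.1‖ : ℂ) ^ c with hφ₂
  -- measurability
  have hmeas₁ : AEStronglyMeasurable φ₁ ((padicHaarPi p n).prod (padicHaarPi p n)) := by
    apply Measurable.aestronglyMeasurable
    exact (((hψ₁loc.continuous.comp continuous_fst).measurable).mul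
      (((hψ₂loc.continuous.comp continuous_snd).measurable).sub
        ((hψ₂loc.continuous.comp continuous_fst).measurable))).mul (kernel_measurable c)
  have hmeas₂ : AEStronglyMeasurable φ₂ ((padicHaarPi p n).prod (padicHaarPi p n)) := by
    apply Measurable.aestronglyMeasurable
    exact ((((hψ₁loc.continuous.comp continuous_snd).measurable).sub
      ((hψ₁loc.continuous.comp continuous_fst).measurable)).mul
      (((hψ₂loc.continuous.comp continuous_snd).measurable).sub
        ((hψ₂loc.continuous.comp continuous_fst).measurable))).mul (kernel_measurable c)
  -- norm of the kernel
  have hker : ∀ q : (Fin n → ℚ_[p]) × (Fin n → ℚ_[p]),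
      (p : ℝ) ^ (-(m : ℤ)) < ‖q.2 - q.1‖ →
      ‖((‖q.2 - q.1‖ : ℝ) : ℂ) ^ c‖ = ‖q.2 - q.1‖ ^ (-s.re - (n : ℝ)) := by
    intro q hq
    have hpos : (0 : ℝ) < ‖q.2 - q.1‖ := lt_trans (by positivity) hq
    rw [Complex.norm_cpow_eq_rpow_re_of_pos hpos, hcre]
  -- integrability of φ₁
  have hbound₁ : ∀ q : (Fin n → ℚ_[p]) × (Fin n → ℚ_[p]), φ₁ q ≠ 0 →
      (p : ℝ) ^ (-(m : ℤ)) < ‖q.2 - q.1‖ ∧ (‖q.1‖ ≤ R₀ ∨ ‖q.2‖ ≤ R₀) ∧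
      ‖φ₁ q‖ ≤ (M₁ * (M₂ + M₂)) * ‖q.2 - q.1‖ ^ (-s.re - (n : ℝ)) := by
    intro q hq
    have hfactors := hq
    rw [hφ₁] at hfactors
    simp only [ne_eq, mul_eq_zero, not_or] at hfactors
    obtain ⟨⟨hf1, hf2⟩, -⟩ := hfactors
    have hδ : (p : ℝ) ^ (-(m : ℤ)) < ‖q.2 - q.1‖ := by
      by_contra hle
      push_neg at hle
      exact hf2 (sub_eq_zero.2 (hm₂' q.1 q.2 hle))
    refine ⟨hδ, Or.inl (hsupp₁ q.1 hf1), ?_⟩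
    have hnorm : ‖φ₁ q‖ = ‖ψ₁ q.1‖ * ‖ψ₂ q.2 - ψ₂ q.1‖ * ‖((‖q.2 - q.1‖ : ℝ) : ℂ) ^ c‖ := by
      rw [hφ₁]; simp [norm_mul]
    rw [hnorm, hker q hδ]
    have h2 : ‖ψ₂ q.2 - ψ₂ q.1‖ ≤ M₂ + M₂ :=
      (norm_sub_le _ _).trans (add_le_add (hM₂ _) (hM₂ _))
    have hrp : (0 : ℝ) ≤ ‖q.2 - q.1‖ ^ (-s.re - (n : ℝ)) := by positivity
    apply mul_le_mul_of_nonneg_right _ hrp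
    exact mul_le_mul (hM₁ _) h2 (norm_nonneg _) hM₁nn
  have hbound₂ : ∀ q : (Fin n → ℚ_[p]) × (Fin n → ℚ_[p]), φ₂ q ≠ 0 →
      (p : ℝ) ^ (-(m : ℤ)) < ‖q.2 - q.1‖ ∧ (‖q.1‖ ≤ R₀ ∨ ‖q.2‖ ≤ R₀) ∧
      ‖φ₂ q‖ ≤ ((M₁ + M₁) * (M₂ + M₂)) * ‖q.2 - q.1‖ ^ (-s.re - (n : ℝ)) := by
    intro q hq
    have hfactors := hq
    rw [hφ₂] at hfactors
    simp only [ne_eq, mul_eq_zero, not_or] at hfactors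
    obtain ⟨⟨hf1, hf2⟩, -⟩ := hfactors
    have hδ : (p : ℝ) ^ (-(m : ℤ)) < ‖q.2 - q.1‖ := by
      by_contra hle
      push_neg at hle
      exact hf2 (sub_eq_zero.2 (hm₂' q.1 q.2 hle))
    have hor : ‖q.1‖ ≤ R₀ ∨ ‖q.2‖ ≤ R₀ := by
      rcases ne_or_eq (ψ₁ q.1) 0 with h | h
      · exact Or.inl (hsupp₁ q.1 h)
      · have : ψ₁ q.2 ≠ 0 := by
          intro h2
          exact hf1 (by rw [h, h2, sub_zero])
        exact Or.inr (hsupp₁ q.2 this)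
    refine ⟨hδ, hor, ?_⟩
    have hnorm : ‖φ₂ q‖ = ‖ψ₁ q.2 - ψ₁ q.1‖ * ‖ψ₂ q.2 - ψ₂ q.1‖
        * ‖((‖q.2 - q.1‖ : ℝ) : ℂ) ^ c‖ := by
      rw [hφ₂]; simp [norm_mul]
    rw [hnorm, hker q hδ]
    have h1 : ‖ψ₁ q.2 - ψ₁ q.1‖ ≤ M₁ + M₁ :=
      (norm_sub_le _ _).trans (add_le_add (hM₁ _) (hM₁ _))
    have h2 : ‖ψ₂ q.2 - ψ₂ q.1‖ ≤ M₂ + M₂ :=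
      (norm_sub_le _ _).trans (add_le_add (hM₂ _) (hM₂ _))
    have hrp : (0 : ℝ) ≤ ‖q.2 - q.1‖ ^ (-s.re - (n : ℝ)) := by positivity
    apply mul_le_mul_of_nonneg_right _ hrp
    exact mul_le_mul h1 h2 (norm_nonneg _) (by linarith)
  have hint₁ : Integrable φ₁ ((padicHaarPi p n).prod (padicHaarPi p n)) :=
    integrable_of_kernel_bound (m := m) hn hs R₀ (M₁ * (M₂ + M₂))
      (by positivity) φ₁ hmeas₁ hbound₁
  have hint₂ : Integrable φ₂ ((padicHaarPi p n).prod (padicHaarPi p n)) :=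
    integrable_of_kernel_bound (m := m) hn hs R₀ ((M₁ + M₁) * (M₂ + M₂))
      (by positivity) φ₂ hmeas₂ hbound₂
  refine ⟨hint₁, hint₂, ?_⟩
  have hswap_int : Integrable (φ₁ ∘ Prod.swap) ((padicHaarPi p n).prod (padicHaarPi p n)) :=
    hint₁.swap
  have hkey : φ₂ = fun q => -(φ₁ q + (φ₁ ∘ Prod.swap) q) := by
    funext q
    rw [hφ₁, hφ₂]
    simp only [Function.comp_apply, Prod.fst_swap, Prod.snd_swap]
    rw [norm_sub_rev q.1 q.2]
    ring
  have hswap_eq : (∫ q, (φ₁ ∘ Prod.swap) q ∂((padicHaarPi p n).prod (padicHaarPi p n)))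
      = ∫ q, φ₁ q ∂((padicHaarPi p n).prod (padicHaarPi p n)) :=
    integral_prod_swap φ₁
  have h2eq : (∫ q, φ₂ q ∂((padicHaarPi p n).prod (padicHaarPi p n)))
      = -((∫ q, φ₁ q ∂((padicHaarPi p n).prod (padicHaarPi p n)))
          + ∫ q, φ₁ q ∂((padicHaarPi p n).prod (padicHaarPi p n))) := by
    rw [hkey]
    rw [integral_neg, integral_add hint₁ hswap_int, hswap_eq]
  have e₁ : (∫ x, ∫ z, ψ₁ x * (ψ₂ z - ψ₂ x) * (‖z - x‖ : ℂ) ^ (-s - (n : ℂ))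
        ∂(padicHaarPi p n) ∂(padicHaarPi p n))
      = ∫ q, φ₁ q ∂((padicHaarPi p n).prod (padicHaarPi p n)) :=
    (integral_prod φ₁ hint₁).symm
  have e₂ : (∫ x, ∫ z, (ψ₁ z - ψ₁ x) * (ψ₂ z - ψ₂ x) * (‖z - x‖ : ℂ) ^ (-s - (n : ℂ))
        ∂(padicHaarPi p n) ∂(padicHaarPi p n))
      = ∫ q, φ₂ q ∂((padicHaarPi p n).prod (padicHaarPi p n)) :=
    (integral_prod φ₂ hint₂).symm
  rw [e₁, e₂, h2eq]
  ring


end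
end
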